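/- arXiv:1409.1627 — 8 statements merged into one kernel-verified Lean document; each statement's English description precedes it below -/
import Mathlib

section
/- Let A be an admissible set of addition chains. If a positive integer m satisfies 0 ≤ δ^A(m) < 1, then m is A-stable. -/
/-- `c` is an addition chain: a nonempty list of positive integers starting at `1`
such that every later entry is the sum of two (not necessarily distinct) earlier entries. -/
def IsAdditionChain (c : List ℕ) : Prop :=
  c.getD 0 0 = 1 ∧
    ∀ k, 0 < k → k < c.length →
      ∃ i j, i < k ∧ j < k ∧ c.getD k 0 = c.getD i 0 + c.getD j 0

/-- `c` is an addition chain whose last entry is `n`; its length is `c.length - 1`. -/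
def IsAdditionChainFor (c : List ℕ) (n : ℕ) : Prop :=
  IsAdditionChain c ∧ c.getD (c.length - 1) 0 = n

/-- ν₂(n): the number of 1's in the binary expansion of `n`. -/
def binaryWeight (n : ℕ) : ℕ := (Nat.digits 2 n).sum

/-- `ℓ^A(n)`: the least length (number of steps, i.e. one less than the number of
entries) of an addition chain for `n` belonging to the set `A` of addition chains. -/
noncomputable def chainLength (A : Set (List ℕ)) (n : ℕ) : ℕ :=
  sInf {r | ∃ c ∈ A, IsAdditionChainFor c n ∧ c.length = r + 1}

/-- A set `A` of addition chains is admissible if (i) every positive `n` has a chain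
in `A` of length at most `⌊log₂ n⌋ + ν₂(n) - 1` (i.e. with at most
`⌊log₂ n⌋ + ν₂(n)` entries) and (ii) `ℓ^A(2n) ≤ ℓ^A(n) + 1` for all positive `n`. -/
def Admissible (A : Set (List ℕ)) : Prop :=
  (∀ n : ℕ, 0 < n → ∃ c ∈ A, IsAdditionChainFor c n ∧
      c.length ≤ Nat.log 2 n + binaryWeight n) ∧
  ∀ n : ℕ, 0 < n → chainLength A (2 * n) ≤ chainLength A n + 1

/-- The A-defect `δ^A(n) = ℓ^A(n) - log₂ n`. -/
noncomputable def Adefect (A : Set (List ℕ)) (n : ℕ) : ℝ :=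
  (chainLength A n : ℝ) - Real.logb 2 n

/-- `m` is A-stable if `ℓ^A(2^k m) = ℓ^A(m) + k` for all `k ≥ 0`. -/
def AStable (A : Set (List ℕ)) (m : ℕ) : Prop :=
  ∀ k : ℕ, chainLength A (2 ^ k * m) = chainLength A m + k

/-- `𝒟^A`: the set of all A-defect values. -/
def defectSet (A : Set (List ℕ)) : Set ℝ :=
  {d | ∃ n : ℕ, 0 < n ∧ d = Adefect A n}

/-- `𝒟^A_st`: the set of all A-stable defects. -/
def stableDefectSet (A : Set (List ℕ)) : Set ℝ :=
  {d | ∃ n : ℕ, 0 < n ∧ AStable A n ∧ d = Adefect A n}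

open scoped Classical in
/-- The order type of a well-ordered subset `S` of a linear order
(junk value `0` if `S` is not well-ordered, i.e. not `Set.IsWF`). -/
noncomputable def setOrderType {X : Type*} [LinearOrder X] (S : Set X) : Ordinal :=
  if h : S.IsWF then
    letI : WellFoundedLT S := ⟨h⟩
    Ordinal.type ((· < ·) : S → S → Prop)
  else 0

lemma chain_entry_le (c : List ℕ) (hc : IsAdditionChain c) :
    ∀ k, k < c.length → c.getD k 0 ≤ 2 ^ k := by
  intro k
  induction k using Nat.strong_induction_on with
  | _ k ih =>
    intro hk
    rcases Nat.eq_zero_or_pos k with rfl | hk0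
    · simpa using hc.1.le
    · obtain ⟨i, j, hi, hj, he⟩ := hc.2 k hk0 hk
      have hi' := ih i hi (lt_trans hi hk)
      have hj' := ih j hj (lt_trans hj hk)
      have h2i : (2:ℕ)^i ≤ 2^(k-1) := Nat.pow_le_pow_right (by norm_num) (by omega)
      have h2j : (2:ℕ)^j ≤ 2^(k-1) := Nat.pow_le_pow_right (by norm_num) (by omega)
      have : 2^(k-1) + 2^(k-1) = 2^k := by
        rw [← two_mul, ← pow_succ']
        congr 1; omega
      omega

lemma exists_min_chain (A : Set (List ℕ)) (hA : Admissible A) (n : ℕ) (hn : 0 < n) :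
    ∃ c ∈ A, IsAdditionChainFor c n ∧ c.length = chainLength A n + 1 := by
  have hne : {r | ∃ c ∈ A, IsAdditionChainFor c n ∧ c.length = r + 1}.Nonempty := by
    obtain ⟨c, hcA, hcn, _⟩ := hA.1 n hn
    have h1 : 1 ≤ c.length := by
      by_contra h
      have : c = [] := by cases c with | nil => rfl | cons a l => simp at h
      rw [this] at hcn
      simp [IsAdditionChainFor, IsAdditionChain] at hcn
    exact ⟨c.length - 1, c, hcA, hcn, by omega⟩
  exact Nat.sInf_mem hne

lemma le_pow_chainLength (A : Set (List ℕ)) (hA : Admissible A) (n : ℕ) (hn : 0 < n) :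
    n ≤ 2 ^ chainLength A n := by
  obtain ⟨c, _, ⟨hc, hlast⟩, hlen⟩ := exists_min_chain A hA n hn
  have := chain_entry_le c hc (c.length - 1) (by omega)
  rw [hlast, hlen] at this
  simpa using this

/-- If a positive integer `m` satisfies `0 ≤ δ^A(m) < 1`, then `m` is `A`-stable. -/
theorem AStable_of_defect_lt_one
    (A : Set (List ℕ)) (hA : Admissible A) (m : ℕ) (hm : 0 < m)
    (h0 : 0 ≤ Adefect A m) (h1 : Adefect A m < 1) :
    AStable A m := by
  intro k
  set L := chainLength A m with hL
  -- upper bound: ℓ(2^k m) ≤ L + k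
  have hub : ∀ k : ℕ, chainLength A (2 ^ k * m) ≤ L + k := by
    intro k
    induction k with
    | zero => simp [hL]
    | succ k ih =>
      have h2 : 2 ^ (k + 1) * m = 2 * (2 ^ k * m) := by ring
      have := hA.2 (2 ^ k * m) (by positivity)
      rw [h2]
      omega
  -- from defect < 1 : 2^L < 2 * m
  have hkey : (2:ℕ) ^ L < 2 * m := by
    have hlt : (L : ℝ) < Real.logb 2 m + 1 := by
      have : (L : ℝ) - Real.logb 2 m < 1 := h1
      linarith
    have hmr : (0:ℝ) < (m:ℝ) := by exact_mod_cast hm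
    have h2L : ((2:ℝ)) ^ (L:ℝ) < (2:ℝ) ^ (Real.logb 2 m + 1) :=
      Real.rpow_lt_rpow_of_exponent_lt one_lt_two hlt
    rw [Real.rpow_add (by norm_num), Real.rpow_logb (by norm_num) (by norm_num) hmr,
      Real.rpow_one] at h2L
    rw [Real.rpow_natCast] at h2L
    have h2L' : ((2:ℕ) ^ L : ℝ) < ((2 * m : ℕ) : ℝ) := by push_cast; linarith
    exact_mod_cast h2L'
  -- lower bound
  have hlb : L + k ≤ chainLength A (2 ^ k * m) := by
    set ℓ := chainLength A (2 ^ k * m) with hℓ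
    have hle : 2 ^ k * m ≤ 2 ^ ℓ := le_pow_chainLength A hA _ (by positivity)
    have : (2:ℕ) ^ (k + L) < 2 ^ (ℓ + 1) := by
      calc (2:ℕ) ^ (k + L) = 2 ^ k * 2 ^ L := by rw [pow_add]
        _ < 2 ^ k * (2 * m) := by
            exact Nat.mul_lt_mul_of_le_of_lt (le_refl _) hkey (by positivity)
        _ = 2 * (2 ^ k * m) := by ring
        _ ≤ 2 * 2 ^ ℓ := by omega
        _ = 2 ^ (ℓ + 1) := by rw [pow_succ]; ring
    have := (Nat.pow_lt_pow_iff_right (a := 2) (by norm_num)).mp this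
    omega
  have := hub k
  omega
end

section
/- Let A be an admissible set of addition chains, let α be a value of δ^A, and let S(α) = {m : δ^A(m) = α}. Then there is a unique positive integer n such that either S(α) = {n·2^k : 0 ≤ k ≤ K} for some finite K ≥ 0, or S(α) = {n·2^k : k ≥ 0}. -/
private lemma defect_two_mul {A : Set (List ℕ)} (hA : Admissible A) {m : ℕ} (hm : 0 < m) :
    Adefect A (2 * m) ≤ Adefect A m := by
  have h := hA.2 m hm
  have hlog : Real.logb 2 ((2 * m : ℕ) : ℝ) = 1 + Real.logb 2 (m : ℝ) := by
    push_cast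
    rw [Real.logb_mul two_ne_zero (by positivity)]
    simp [Real.logb_self_eq_one]
  have hc : ((chainLength A (2 * m) : ℝ)) ≤ (chainLength A m : ℝ) + 1 := by exact_mod_cast h
  unfold Adefect
  rw [hlog]
  linarith

private lemma defect_pow_le {A : Set (List ℕ)} (hA : Admissible A) {m : ℕ} (hm : 0 < m) :
    ∀ k : ℕ, Adefect A (m * 2 ^ k) ≤ Adefect A m := by
  intro k
  induction k with
  | zero => simp
  | succ k ih =>
    have h2 : m * 2 ^ (k + 1) = 2 * (m * 2 ^ k) := by ring
    calc Adefect A (m * 2 ^ (k + 1)) = Adefect A (2 * (m * 2 ^ k)) := by rw [h2]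
      _ ≤ Adefect A (m * 2 ^ k) := defect_two_mul hA (by positivity)
      _ ≤ Adefect A m := ih

private lemma defect_pow_le_pow {A : Set (List ℕ)} (hA : Admissible A) {m : ℕ} (hm : 0 < m)
    {j k : ℕ} (hjk : j ≤ k) : Adefect A (m * 2 ^ k) ≤ Adefect A (m * 2 ^ j) := by
  have : m * 2 ^ k = (m * 2 ^ j) * 2 ^ (k - j) := by
    rw [mul_assoc, ← pow_add, Nat.add_sub_cancel' hjk]
  rw [this]
  exact defect_pow_le hA (by positivity) _

/-- If `α` is a value of `δ^A` and `S(α) = {m : δ^A(m) = α}` (as a set of positive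
integers), then there is a unique positive integer `n` such that either
`S(α) = {n·2^k : 0 ≤ k ≤ K}` for some finite `K`, or `S(α) = {n·2^k : k ≥ 0}`. -/
theorem exists_unique_leader
    (A : Set (List ℕ)) (hA : Admissible A) (α : ℝ)
    (hα : ∃ n : ℕ, 0 < n ∧ Adefect A n = α) :
    ∃! n : ℕ, 0 < n ∧
      ((∃ K : ℕ, {m : ℕ | 0 < m ∧ Adefect A m = α} = {m : ℕ | ∃ k ≤ K, m = n * 2 ^ k}) ∨
        {m : ℕ | 0 < m ∧ Adefect A m = α} = {m : ℕ | ∃ k : ℕ, m = n * 2 ^ k}) := by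
  classical
  obtain ⟨n0, hn0, hd0⟩ := hα
  set S : Set ℕ := {m : ℕ | 0 < m ∧ Adefect A m = α} with hSdef
  have hSne : S.Nonempty := ⟨n0, hn0, hd0⟩
  set n : ℕ := sInf S with hndef
  have hnS : n ∈ S := Nat.sInf_mem hSne
  have hnpos : 0 < n := hnS.1
  have hmin : ∀ m ∈ S, n ≤ m := fun m hm => Nat.sInf_le hm
  -- every element of S is n * 2 ^ k
  have hpow : ∀ m ∈ S, ∃ k : ℕ, m = n * 2 ^ k := by
    intro m hm
    have hmpos : 0 < m := hm.1
    have hle : n ≤ m := hmin m hm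
    have hdm : Adefect A m = Adefect A n := by rw [hm.2, hnS.2]
    have hlogle : Real.logb 2 (n : ℝ) ≤ Real.logb 2 (m : ℝ) :=
      Real.logb_le_logb_of_le (by norm_num) (by exact_mod_cast hnpos) (by exact_mod_cast hle)
    unfold Adefect at hdm
    have hll : chainLength A n ≤ chainLength A m := by
      have : (chainLength A n : ℝ) ≤ (chainLength A m : ℝ) := by linarith
      exact_mod_cast this
    refine ⟨chainLength A m - chainLength A n, ?_⟩
    have hk : ((chainLength A m - chainLength A n : ℕ) : ℝ)
        = (chainLength A m : ℝ) - (chainLength A n : ℝ) := by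
      push_cast [Nat.cast_sub hll]; ring
    have hlogeq : Real.logb 2 (m : ℝ)
        = Real.logb 2 ((n * 2 ^ (chainLength A m - chainLength A n) : ℕ) : ℝ) := by
      push_cast
      rw [Real.logb_mul (by positivity) (by positivity), Real.logb_pow]
      simp only [Real.logb_self_eq_one (by norm_num : (1:ℝ) < 2) ]
      rw [hk]
      ring_nf
      linarith
    have hmem1 : (m : ℝ) ∈ Set.Ioi (0 : ℝ) := by
      simp only [Set.mem_Ioi]; exact_mod_cast hmpos
    have hmem2 : ((n * 2 ^ (chainLength A m - chainLength A n) : ℕ) : ℝ) ∈ Set.Ioi (0 : ℝ) := by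
      simp only [Set.mem_Ioi]
      have : 0 < n * 2 ^ (chainLength A m - chainLength A n) := by positivity
      exact_mod_cast this
    have := Real.logb_injOn_pos (by norm_num : (1:ℝ) < 2) hmem1 hmem2 hlogeq
    exact_mod_cast this
  -- T : set of exponents
  set T : Set ℕ := {k : ℕ | n * 2 ^ k ∈ S} with hTdef
  have hT0 : (0 : ℕ) ∈ T := by simpa [hTdef] using hnS
  have hTdown : ∀ {j k : ℕ}, j ≤ k → k ∈ T → j ∈ T := by
    intro j k hjk hk
    have hk' : n * 2 ^ k ∈ S := hk
    have h1 : Adefect A (n * 2 ^ k) ≤ Adefect A (n * 2 ^ j) :=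
      defect_pow_le_pow hA hnpos hjk
    have h2 : Adefect A (n * 2 ^ j) ≤ Adefect A n := defect_pow_le hA hnpos j
    have : Adefect A (n * 2 ^ j) = α := le_antisymm (by rw [← hnS.2]; exact h2)
      (by rw [← hk'.2]; exact h1)
    exact ⟨by positivity, this⟩
  have huniq : ∀ y : ℕ, (0 < y ∧
      ((∃ K : ℕ, {m : ℕ | 0 < m ∧ Adefect A m = α} = {m : ℕ | ∃ k ≤ K, m = y * 2 ^ k}) ∨
        {m : ℕ | 0 < m ∧ Adefect A m = α} = {m : ℕ | ∃ k : ℕ, m = y * 2 ^ k})) → y = n := by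
    rintro y ⟨hy, hcase⟩
    have hyS : y ∈ S := by
      rcases hcase with ⟨K, hK⟩ | h
      · rw [hSdef, hK]; exact ⟨0, Nat.zero_le _, by simp⟩
      · rw [hSdef, h]; exact ⟨0, by simp⟩
    have hny : n ≤ y := hmin y hyS
    have hyn : y ≤ n := by
      have hnmem : n ∈ S := hnS
      rcases hcase with ⟨K, hK⟩ | h
      · rw [hSdef, hK] at hnmem
        obtain ⟨k, _, hk⟩ := hnmem
        calc y ≤ y * 2 ^ k := Nat.le_mul_of_pos_right _ (by positivity)
          _ = n := hk.symm
      · rw [hSdef, h] at hnmem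
        obtain ⟨k, hk⟩ := hnmem
        calc y ≤ y * 2 ^ k := Nat.le_mul_of_pos_right _ (by positivity)
          _ = n := hk.symm
    exact le_antisymm hyn hny
  by_cases hall : ∀ k : ℕ, k ∈ T
  · refine ⟨n, ⟨hnpos, Or.inr ?_⟩, huniq⟩
    ext m
    constructor
    · intro hm
      exact hpow m hm
    · rintro ⟨k, rfl⟩
      exact hall k
  · push_neg at hall
    obtain ⟨k0, hk0⟩ := hall
    have hbdd : BddAbove T := ⟨k0, fun j hj => by
      by_contra hlt
      push_neg at hlt
      exact hk0 (hTdown (le_of_lt hlt) hj)⟩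
    set K : ℕ := sSup T with hKdef
    have hKT : K ∈ T := Nat.sSup_mem ⟨0, hT0⟩ hbdd
    refine ⟨n, ⟨hnpos, Or.inl ⟨K, ?_⟩⟩, huniq⟩
    ext m
    constructor
    · intro hm
      obtain ⟨k, rfl⟩ := hpow m hm
      exact ⟨k, le_csSup hbdd hm, rfl⟩
    · rintro ⟨k, hkK, rfl⟩
      exact hTdown hkK hKT
end

section
/- Let A be an admissible set of addition chains and let m ≥ n be positive integers. If q := δ^A(n) − δ^A(m) is a rational number, then q is a nonnegative integer, m = n·2^k for some integer k ≥ 0, and q = ℓ^A(n) + k − ℓ^A(m). In particular this applies when δ^A(n) = δ^A(m). -/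
lemma chainLength_pow_two_mul (A : Set (List ℕ)) (hA : Admissible A) (n : ℕ) (hn : 0 < n)
    (k : ℕ) : chainLength A (2 ^ k * n) ≤ chainLength A n + k := by
  induction k with
  | zero => simp
  | succ k ih =>
      have h2 : (2 : ℕ) ^ (k + 1) * n = 2 * (2 ^ k * n) := by ring
      calc chainLength A (2 ^ (k + 1) * n) = chainLength A (2 * (2 ^ k * n)) := by rw [h2]
        _ ≤ chainLength A (2 ^ k * n) + 1 := hA.2 _ (by positivity)
        _ ≤ chainLength A n + k + 1 := by omega

/-- If `m ≥ n` are positive integers and `q = δ^A(n) - δ^A(m)` is rational, then `q` is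
a nonnegative integer, `m = n·2^k` for some `k ≥ 0`, and `q = ℓ^A(n) + k - ℓ^A(m)`. -/
theorem eq_pow_two_mul_of_defect_sub_rat
    (A : Set (List ℕ)) (hA : Admissible A) (m n : ℕ) (hn : 0 < n) (hnm : n ≤ m)
    (q : ℚ) (hq : (q : ℝ) = Adefect A n - Adefect A m) :
    (∃ j : ℕ, q = (j : ℚ)) ∧
    ∃ k : ℕ, m = n * 2 ^ k ∧
      (q : ℝ) = (chainLength A n : ℝ) + (k : ℝ) - (chainLength A m : ℝ) := by
  have hm : 0 < m := hn.trans_le hnm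
  have hmR : (0:ℝ) < (m:ℝ) := by exact_mod_cast hm
  have hnR : (0:ℝ) < (n:ℝ) := by exact_mod_cast hn
  set p : ℚ := q - (chainLength A n : ℚ) + (chainLength A m : ℚ) with hp
  have hp' : (p : ℝ) = Real.logb 2 m - Real.logb 2 n := by
    have : (p : ℝ) = (q : ℝ) - (chainLength A n : ℝ) + (chainLength A m : ℝ) := by
      push_cast [hp]; ring
    rw [this, hq]; unfold Adefect; ring
  have hp0 : 0 ≤ (p : ℝ) := by
    rw [hp']
    have := (Real.logb_le_logb (by norm_num : (1:ℝ) < 2) hnR hmR).mpr (by exact_mod_cast hnm)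
    linarith
  have hp0' : 0 ≤ p := by exact_mod_cast hp0
  set b : ℕ := p.den with hb
  set a : ℕ := p.num.toNat with ha
  have hbpos : 0 < b := p.pos
  have hpa : (p : ℝ) * b = a := by
    have h1 : (p * (p.den : ℚ) : ℚ) = p.num := Rat.mul_den_eq_num p
    have h2 : (p.num.toNat : ℤ) = p.num := Int.toNat_of_nonneg (Rat.num_nonneg.mpr hp0')
    have : ((p * (p.den : ℚ) : ℚ) : ℝ) = ((p.num : ℤ) : ℝ) := by exact_mod_cast h1
    push_cast at this
    rw [← h2] at this
    push_cast at this
    exact this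
  -- m^b = n^b * 2^a in ℝ
  have hlog : Real.logb 2 ((m:ℝ) ^ b) = Real.logb 2 ((n:ℝ) ^ b * (2:ℝ) ^ a) := by
    rw [Real.logb_pow, Real.logb_mul (by positivity) (by positivity), Real.logb_pow, Real.logb_pow,
      Real.logb_self_eq_one (by norm_num)]
    have : (b : ℝ) * (Real.logb 2 m - Real.logb 2 n) = a := by
      rw [← hp']; linarith [hpa]
    linarith [this]
  have hRe : (m:ℝ) ^ b = (n:ℝ) ^ b * (2:ℝ) ^ a :=
    Real.logb_injOn_pos (by norm_num : (1:ℝ) < 2)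
      (Set.mem_Ioi.mpr (by positivity)) (Set.mem_Ioi.mpr (by positivity)) hlog
  have hNat : m ^ b = n ^ b * 2 ^ a := by exact_mod_cast hRe
  -- n ∣ m
  have hdvd : n ∣ m := by
    rw [← Nat.pow_dvd_pow_iff hbpos.ne']
    exact ⟨2 ^ a, hNat⟩
  obtain ⟨t, ht⟩ := hdvd
  have htpow : t ^ b = 2 ^ a := by
    have h1 : n ^ b * t ^ b = n ^ b * 2 ^ a := by
      rw [← mul_pow, ← ht]; exact hNat
    exact Nat.eq_of_mul_eq_mul_left (Nat.pow_pos hn) h1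
  have htdvd : t ∣ 2 ^ a := by
    refine dvd_trans (dvd_pow_self t hbpos.ne') ?_
    rw [htpow]
  obtain ⟨k, hka, hk⟩ := (Nat.dvd_prime_pow Nat.prime_two).mp htdvd
  have hmnk : m = n * 2 ^ k := by rw [ht, hk]
  -- log identity: logb 2 m = logb 2 n + k
  have hlogm : Real.logb 2 m = Real.logb 2 n + k := by
    have : (m:ℝ) = (n:ℝ) * (2:ℝ) ^ k := by exact_mod_cast hmnk
    rw [this, Real.logb_mul (by positivity) (by positivity), Real.logb_pow,
      Real.logb_self_eq_one (by norm_num)]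
    ring
  have hqk : (q : ℝ) = (chainLength A n : ℝ) + (k : ℝ) - (chainLength A m : ℝ) := by
    rw [hq]; unfold Adefect; rw [hlogm]; ring
  refine ⟨?_, k, hmnk, hqk⟩
  have hle : chainLength A m ≤ chainLength A n + k := by
    have := chainLength_pow_two_mul A hA n hn k
    rwa [show 2 ^ k * n = m by rw [hmnk]; ring] at this
  refine ⟨chainLength A n + k - chainLength A m, ?_⟩
  have : ((chainLength A n + k - chainLength A m : ℕ) : ℝ) = (q : ℝ) := by
    rw [hqk]; push_cast [hle]; ring
  exact_mod_cast this.symm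
end

section
/- Let A be an admissible set of addition chains and let n, m be positive integers. If δ^A(n) = δ^A(m) and n is A-stable, then m is A-stable. -/
private lemma chainLength_pow_le (A : Set (List ℕ)) (hA : Admissible A)
    (m : ℕ) (hm : 0 < m) : ∀ j : ℕ, chainLength A (2 ^ j * m) ≤ chainLength A m + j := by
  intro j
  induction j with
  | zero => simp
  | succ j ih =>
      have heq : 2 ^ (j + 1) * m = 2 * (2 ^ j * m) := by ring
      have h := hA.2 (2 ^ j * m) (by positivity)
      rw [heq]
      omega

/-- If `δ^A(n) = δ^A(m)` and `n` is `A`-stable, then so is `m`. -/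
theorem AStable_of_defect_eq
    (A : Set (List ℕ)) (hA : Admissible A) (n m : ℕ) (hn : 0 < n) (hm : 0 < m)
    (hd : Adefect A n = Adefect A m) (hst : AStable A n) :
    AStable A m := by
  -- t = ℓ(n) - ℓ(m) is an integer with log₂ n = log₂ m + t
  set t : ℤ := (chainLength A n : ℤ) - (chainLength A m : ℤ) with ht
  have hn' : (0:ℝ) < n := by exact_mod_cast hn
  have hm' : (0:ℝ) < m := by exact_mod_cast hm
  have hlog : Real.logb 2 n = Real.logb 2 m + (t : ℝ) := by
    unfold Adefect at hd
    push_cast [ht]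
    linarith
  have hpow : (n : ℝ) = (m : ℝ) * (2:ℝ) ^ t := by
    have e1 : (n:ℝ) = (2:ℝ) ^ (Real.logb 2 (n:ℝ)) :=
      (Real.rpow_logb two_pos (by norm_num) hn').symm
    rw [e1, hlog, Real.rpow_add two_pos,
      Real.rpow_logb two_pos (by norm_num) hm', Real.rpow_intCast]
  rcases le_or_gt 0 t with ht0 | ht0
  · -- n = 2^k * m with k = t.toNat, and ℓ(n) = ℓ(m) + k
    set k : ℕ := t.toNat with hk
    have htk : (t : ℝ) = (k : ℝ) := by
      rw [hk]; exact_mod_cast (Int.toNat_of_nonneg ht0).symm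
    have hnm : n = 2 ^ k * m := by
      have : (n : ℝ) = ((2 ^ k * m : ℕ) : ℝ) := by
        rw [hpow]
        push_cast
        rw [← Real.rpow_intCast, htk, Real.rpow_natCast]
        ring
      exact_mod_cast this
    have hlnm : chainLength A n = chainLength A m + k := by
      have : t = (k : ℤ) := (Int.toNat_of_nonneg ht0).symm
      omega
    intro j
    have hub := chainLength_pow_le A hA m hm j
    have hub2 := chainLength_pow_le A hA (2 ^ j * m) (by positivity) k
    have he : 2 ^ k * (2 ^ j * m) = 2 ^ j * n := by rw [hnm]; ring
    rw [he] at hub2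
    have := hst j
    omega
  · -- m = 2^k * n with k = (-t).toNat
    set k : ℕ := (-t).toNat with hk
    have htk : (t : ℝ) = -(k : ℝ) := by
      have : ((-t).toNat : ℤ) = -t := Int.toNat_of_nonneg (by omega)
      have h2 : ((k : ℤ) : ℝ) = ((-t : ℤ) : ℝ) := by exact_mod_cast this
      push_cast at h2 ⊢
      linarith
    have hmn : m = 2 ^ k * n := by
      have : (m : ℝ) = ((2 ^ k * n : ℕ) : ℝ) := by
        have h2k : (0:ℝ) < (2:ℝ) ^ t := by positivity
        push_cast
        rw [hpow, ← Real.rpow_intCast, htk, Real.rpow_neg (by norm_num),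
          Real.rpow_natCast]
        field_simp
      exact_mod_cast this
    intro j
    have h1 := hst (j + k)
    have h2 := hst k
    have he1 : 2 ^ j * m = 2 ^ (j + k) * n := by rw [hmn]; ring
    rw [he1, h1, hmn, h2]
    omega
end

section
/- Let A be an admissible set of addition chains. A defect α ∈ 𝒟^A is an A-stable defect if and only if α is the smallest element β of 𝒟^A satisfying β ≡ α (mod 1), i.e., the smallest β ∈ 𝒟^A with β − α ∈ ℤ. -/
lemma logb_pow_mul (k n : ℕ) (hn : 0 < n) :
    Real.logb 2 ((2 ^ k * n : ℕ) : ℝ) = k + Real.logb 2 n := by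
  have hn' : (0:ℝ) < (n:ℝ) := by exact_mod_cast hn
  push_cast
  rw [Real.logb_mul (by positivity) (by positivity), Real.logb_pow,
    Real.logb_self_eq_one (by norm_num)]
  ring

lemma defect_two_mul_le (A : Set (List ℕ)) (hA : Admissible A) {n : ℕ} (hn : 0 < n) :
    Adefect A (2 * n) ≤ Adefect A n := by
  have h := hA.2 n hn
  have hl : Real.logb 2 ((2 * n : ℕ) : ℝ) = 1 + Real.logb 2 n := by
    have := logb_pow_mul 1 n hn
    simpa using this
  have h' : (chainLength A (2 * n) : ℝ) ≤ (chainLength A n : ℝ) + 1 := by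
    exact_mod_cast h
  unfold Adefect
  rw [hl]
  linarith

lemma defect_pow_mul_le (A : Set (List ℕ)) (hA : Admissible A) {n : ℕ} (hn : 0 < n)
    (k : ℕ) : Adefect A (2 ^ k * n) ≤ Adefect A n := by
  induction k with
  | zero => simp
  | succ k ih =>
      have he : 2 ^ (k + 1) * n = 2 * (2 ^ k * n) := by ring
      rw [he]
      exact (defect_two_mul_le A hA (by positivity)).trans ih

lemma stable_defect_pow (A : Set (List ℕ)) {m : ℕ} (hm : 0 < m) (hs : AStable A m)
    (k : ℕ) : Adefect A (2 ^ k * m) = Adefect A m := by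
  unfold Adefect
  rw [hs k, logb_pow_mul k m hm]
  push_cast
  ring

/-- A defect `α ∈ 𝒟^A` is an `A`-stable defect iff `α` is the smallest `β ∈ 𝒟^A`
with `β ≡ α (mod 1)`, i.e. with `β - α ∈ ℤ`. -/
theorem mem_stableDefectSet_iff_isLeast
    (A : Set (List ℕ)) (hA : Admissible A) (α : ℝ) (hα : α ∈ defectSet A) :
    α ∈ stableDefectSet A ↔
      IsLeast {β | β ∈ defectSet A ∧ ∃ z : ℤ, β - α = (z : ℝ)} α := by
  obtain ⟨n₀, hn₀, hαn₀⟩ := hα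
  constructor
  · rintro ⟨m, hm, hstab, rfl⟩
    refine ⟨⟨⟨m, hm, rfl⟩, ⟨0, by simp⟩⟩, ?_⟩
    rintro β ⟨⟨n, hn, rfl⟩, z, hz⟩
    have hn' : (0:ℝ) < (n:ℝ) := by exact_mod_cast hn
    have hm' : (0:ℝ) < (m:ℝ) := by exact_mod_cast hm
    set t : ℤ := (chainLength A n : ℤ) - (chainLength A m : ℤ) - z with ht_def
    have ht : Real.logb 2 (n:ℝ) - Real.logb 2 (m:ℝ) = (t:ℝ) := by
      unfold Adefect at hz
      rw [ht_def]
      push_cast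
      linarith
    have hn_eq : (n:ℝ) = (2:ℝ) ^ ((t:ℤ):ℝ) * (m:ℝ) := by
      have hlog : Real.logb 2 (n:ℝ) = (t:ℝ) + Real.logb 2 (m:ℝ) := by linarith
      calc (n:ℝ) = (2:ℝ) ^ Real.logb 2 (n:ℝ) :=
            (Real.rpow_logb (by norm_num) (by norm_num) hn').symm
        _ = (2:ℝ) ^ ((t:ℝ) + Real.logb 2 (m:ℝ)) := by rw [hlog]
        _ = (2:ℝ) ^ ((t:ℝ)) * (2:ℝ) ^ Real.logb 2 (m:ℝ) :=
            Real.rpow_add (by norm_num) _ _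
        _ = (2:ℝ) ^ ((t:ℝ)) * (m:ℝ) := by
            rw [Real.rpow_logb (by norm_num) (by norm_num) hm']
    rcases le_or_gt 0 t with ht0 | ht0
    · -- n = 2^t.toNat * m, so the defect of n equals that of m by stability
      have hcast : ((t.toNat : ℕ) : ℝ) = (t:ℝ) := by
        exact_mod_cast congrArg (fun x : ℤ => (x : ℝ)) (Int.toNat_of_nonneg ht0)
      have hnm : (n:ℝ) = ((2 ^ t.toNat * m : ℕ) : ℝ) := by
        push_cast
        rw [hn_eq, ← Real.rpow_natCast 2 t.toNat, hcast]
      have hnm' : n = 2 ^ t.toNat * m := by exact_mod_cast hnm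
      rw [hnm', stable_defect_pow A hm hstab t.toNat]
    · -- m = 2^(-t).toNat * n, so the defect of m is ≤ that of n
      have hcast : (((-t).toNat : ℕ) : ℝ) = ((-t : ℤ) : ℝ) := by
        exact_mod_cast congrArg (fun x : ℤ => (x : ℝ))
          (Int.toNat_of_nonneg (by omega : (0:ℤ) ≤ -t))
      have hmn : (m:ℝ) = ((2 ^ (-t).toNat * n : ℕ) : ℝ) := by
        push_cast
        rw [← Real.rpow_natCast 2 (-t).toNat, hcast]
        have h2t : (2:ℝ) ^ ((t:ℝ)) ≠ 0 := by positivity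
        push_cast
        rw [Real.rpow_neg (by norm_num), hn_eq, inv_mul_cancel_left₀ h2t]
      have hmn' : m = 2 ^ (-t).toNat * n := by exact_mod_cast hmn
      calc Adefect A m = Adefect A (2 ^ (-t).toNat * n) := by rw [← hmn']
        _ ≤ Adefect A n := defect_pow_mul_le A hA hn _
  · rintro ⟨hαmem, hleast⟩
    refine ⟨n₀, hn₀, ?_, hαn₀⟩
    intro k
    have hpos : 0 < 2 ^ k * n₀ := by positivity
    have h1 : Adefect A (2 ^ k * n₀) ≤ α := by
      rw [hαn₀]; exact defect_pow_mul_le A hA hn₀ k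
    have h2 : α ≤ Adefect A (2 ^ k * n₀) := by
      refine hleast ⟨⟨2 ^ k * n₀, hpos, rfl⟩,
        ⟨(chainLength A (2 ^ k * n₀) : ℤ) - (chainLength A n₀ : ℤ) - (k : ℤ), ?_⟩⟩
      rw [hαn₀]
      unfold Adefect
      rw [logb_pow_mul k n₀ hn₀]
      push_cast
      ring
    have heq : Adefect A (2 ^ k * n₀) = α := le_antisymm h1 h2
    rw [hαn₀] at heq
    unfold Adefect at heq
    rw [logb_pow_mul k n₀ hn₀] at heq
    have : (chainLength A (2 ^ k * n₀) : ℝ) = (chainLength A n₀ : ℝ) + (k : ℝ) := by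
      linarith
    exact_mod_cast this
end

section
/- Let X be a totally ordered set, α an ordinal, and S a well-ordered subset of X that can be written as a finite union S = S₁ ∪ … ∪ S_k such that (i) each S_i has order type at most ω^α, and (ii) every S_i of order type exactly ω^α is cofinal in S. Then the order type of S is at most ω^α. In particular, if in addition at least one S_i has order type exactly ω^α, then S has order type exactly ω^α. -/
namespace Ordinal

noncomputable def nadd : Ordinal.{u} → Ordinal.{u} → Ordinal.{u}
  | a, b => max (blsub.{u, u} a fun a' _ => nadd a' b) (blsub.{u, u} b fun b' _ => nadd a b')
termination_by a b => (a, b)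
decreasing_by
  · exact Prod.Lex.left _ _ (by assumption)
  · exact Prod.Lex.right _ (by assumption)

infixl:65 " ♯ " => Ordinal.nadd

theorem nadd_def (a b : Ordinal.{u}) : a ♯ b =
    max (blsub.{u, u} a fun a' _ => a' ♯ b) (blsub.{u, u} b fun b' _ => a ♯ b') := by
  rw [nadd]

theorem lt_nadd_of_lt_left {a' a : Ordinal.{u}} (h : a' < a) (b : Ordinal.{u}) : a' ♯ b < a ♯ b := by
  rw [nadd_def a b]
  exact lt_max_of_lt_left (lt_blsub.{u, u} (fun a' _ => a' ♯ b) a' h)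

theorem lt_nadd_of_lt_right {b' b : Ordinal.{u}} (h : b' < b) (a : Ordinal.{u}) : a ♯ b' < a ♯ b := by
  rw [nadd_def a b]
  exact lt_max_of_lt_right (lt_blsub.{u, u} (fun b' _ => a ♯ b') b' h)

theorem nadd_le_iff {a b c : Ordinal.{u}} :
    b ♯ c ≤ a ↔ (∀ b' < b, b' ♯ c < a) ∧ ∀ c' < c, b ♯ c' < a := by
  constructor
  · intro h
    exact ⟨fun b' hb => (lt_nadd_of_lt_left hb c).trans_le h,
      fun c' hc => (lt_nadd_of_lt_right hc b).trans_le h⟩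
  · rintro ⟨h1, h2⟩
    rw [nadd_def]
    exact max_le (blsub_le_iff.2 h1) (blsub_le_iff.2 h2)

theorem nadd_lt_nadd_right {a b : Ordinal.{u}} (h : a < b) (c : Ordinal.{u}) : a ♯ c < b ♯ c :=
  lt_nadd_of_lt_left h c

theorem nadd_lt_nadd_left {b c : Ordinal.{u}} (h : b < c) (a : Ordinal.{u}) : a ♯ b < a ♯ c :=
  lt_nadd_of_lt_right h a

theorem nadd_le_nadd_left {b c : Ordinal.{u}} (h : b ≤ c) (a : Ordinal.{u}) : a ♯ b ≤ a ♯ c := by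
  induction a using Ordinal.induction with
  | h a IH =>
    rw [nadd_le_iff]
    exact ⟨fun a' ha => (IH a' ha).trans_lt (lt_nadd_of_lt_left ha c),
      fun b' hb => lt_nadd_of_lt_right (hb.trans_le h) a⟩

theorem nadd_le_nadd_right {b c : Ordinal.{u}} (h : b ≤ c) (a : Ordinal.{u}) : b ♯ a ≤ c ♯ a := by
  induction a using Ordinal.induction with
  | h a IH =>
    rw [nadd_le_iff]
    exact ⟨fun b' hb => lt_nadd_of_lt_left (hb.trans_le h) a,
      fun a' ha => (IH a' ha).trans_lt (lt_nadd_of_lt_right ha c)⟩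

theorem zero_nadd (a : Ordinal.{u}) : 0 ♯ a = a := by
  induction a using Ordinal.induction with
  | h a IH =>
    have hle : 0 ♯ a ≤ a := by
      rw [nadd_le_iff]
      refine ⟨fun b' hb => absurd hb not_lt_zero, fun c' hc => ?_⟩
      rw [IH c' hc]; exact hc
    rcases lt_or_eq_of_le hle with hlt | heq
    · have h1 := IH _ hlt
      have h2 := lt_nadd_of_lt_right hlt 0
      rw [h1] at h2
      exact absurd h2 (lt_irrefl _)
    · exact heq

theorem nadd_zero (a : Ordinal.{u}) : a ♯ 0 = a := by
  induction a using Ordinal.induction with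
  | h a IH =>
    have hle : a ♯ 0 ≤ a := by
      rw [nadd_le_iff]
      refine ⟨fun b' hb => ?_, fun c' hc => absurd hc not_lt_zero⟩
      rw [IH b' hb]; exact hb
    rcases lt_or_eq_of_le hle with hlt | heq
    · have h1 := IH _ hlt
      have h2 := lt_nadd_of_lt_left hlt 0
      rw [h1] at h2
      exact absurd h2 (lt_irrefl _)
    · exact heq

end Ordinal

namespace NaturalOps
theorem nadd_ns_marker : True := trivial
end NaturalOps

open Ordinal
open scoped NaturalOps

/-- Block decomposition bound for natural addition. -/
theorem nadd_block_le (β : Ordinal)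
    (hN : ∀ x y, x < omega0 ^ β → y < omega0 ^ β → x ♯ y < omega0 ^ β) :
    ∀ (k : ℕ) (c : Ordinal) (m n : ℕ), m + n ≤ k →
      ∀ a₀ b₀ : Ordinal, a₀ < omega0 ^ β → b₀ < omega0 ^ β → a₀ ♯ b₀ = c →
      (omega0 ^ β * m + a₀) ♯ (omega0 ^ β * n + b₀) ≤ omega0 ^ β * (m + n : ℕ) + c := by
  have hne : (omega0 ^ β : Ordinal) ≠ 0 := (opow_pos β omega0_pos).ne'
  intro k
  induction k with
  | zero =>
    intro c m n hmn a₀ b₀ ha hb hc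
    obtain ⟨rfl, rfl⟩ : m = 0 ∧ n = 0 := by omega
    simpa using hc.le
  | succ k IHk =>
    intro c
    induction c using Ordinal.induction with
    | h c IHc =>
      intro m n hmn a₀ b₀ ha hb hc
      rw [nadd_le_iff]
      constructor
      · intro a' ha'
        have hdm := Ordinal.div_add_mod a' (omega0 ^ β)
        have hr : a' % omega0 ^ β < omega0 ^ β := Ordinal.mod_lt a' hne
        have hq : a' / omega0 ^ β < ((m + 1 : ℕ) : Ordinal) := by
          rw [Ordinal.div_lt hne]
          calc a' < omega0 ^ β * m + a₀ := ha'
            _ < omega0 ^ β * m + omega0 ^ β := add_lt_add_right ha _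
            _ = omega0 ^ β * ((m + 1 : ℕ) : Ordinal) := by push_cast [mul_add, mul_one]; rfl
        obtain ⟨mq, hmq⟩ := Ordinal.lt_omega0.1 (hq.trans (nat_lt_omega0 _))
        rw [hmq] at hq hdm
        have hmq' : mq ≤ m := by
          have : mq < m + 1 := by exact_mod_cast hq
          omega
        rcases lt_or_eq_of_le hmq' with hlt | heq
        · have h1 := IHk (a' % omega0 ^ β ♯ b₀) mq n (by omega) _ b₀ hr hb rfl
          rw [hdm] at h1
          calc a' ♯ (omega0 ^ β * n + b₀)
              ≤ omega0 ^ β * ((mq + n : ℕ) : Ordinal) + (a' % omega0 ^ β ♯ b₀) := h1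
            _ < omega0 ^ β * ((mq + n : ℕ) : Ordinal) + omega0 ^ β :=
                add_lt_add_right (hN _ _ hr hb) _
            _ = omega0 ^ β * ((mq + n + 1 : ℕ) : Ordinal) := by push_cast [mul_add, mul_one]; rfl
            _ ≤ omega0 ^ β * ((m + n : ℕ) : Ordinal) := by
                refine mul_le_mul_right ?_ _
                exact_mod_cast by omega
            _ ≤ omega0 ^ β * ((m + n : ℕ) : Ordinal) + c := le_self_add
        · subst heq
          have hrlt : a' % omega0 ^ β < a₀ := by
            have h2 : omega0 ^ β * (mq : ℕ) + a' % omega0 ^ β < omega0 ^ β * (mq : ℕ) + a₀ := by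
              rw [hdm]; exact ha'
            exact (add_lt_add_iff_left _).1 h2
          have hcc : a' % omega0 ^ β ♯ b₀ < c := hc ▸ nadd_lt_nadd_right hrlt b₀
          have h1 := IHc _ hcc mq n hmn _ b₀ hr hb rfl
          rw [hdm] at h1
          exact lt_of_le_of_lt h1 (add_lt_add_right hcc _)
      · intro b' hb'
        have hdm := Ordinal.div_add_mod b' (omega0 ^ β)
        have hr : b' % omega0 ^ β < omega0 ^ β := Ordinal.mod_lt b' hne
        have hq : b' / omega0 ^ β < ((n + 1 : ℕ) : Ordinal) := by
          rw [Ordinal.div_lt hne]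
          calc b' < omega0 ^ β * n + b₀ := hb'
            _ < omega0 ^ β * n + omega0 ^ β := add_lt_add_right hb _
            _ = omega0 ^ β * ((n + 1 : ℕ) : Ordinal) := by push_cast [mul_add, mul_one]; rfl
        obtain ⟨nq, hnq⟩ := Ordinal.lt_omega0.1 (hq.trans (nat_lt_omega0 _))
        rw [hnq] at hq hdm
        have hnq' : nq ≤ n := by
          have : nq < n + 1 := by exact_mod_cast hq
          omega
        rcases lt_or_eq_of_le hnq' with hlt | heq
        · have h1 := IHk (a₀ ♯ (b' % omega0 ^ β)) m nq (by omega) a₀ _ ha hr rfl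
          rw [hdm] at h1
          calc (omega0 ^ β * m + a₀) ♯ b'
              ≤ omega0 ^ β * ((m + nq : ℕ) : Ordinal) + (a₀ ♯ b' % omega0 ^ β) := h1
            _ < omega0 ^ β * ((m + nq : ℕ) : Ordinal) + omega0 ^ β :=
                add_lt_add_right (hN _ _ ha hr) _
            _ = omega0 ^ β * ((m + nq + 1 : ℕ) : Ordinal) := by push_cast [mul_add, mul_one]; rfl
            _ ≤ omega0 ^ β * ((m + n : ℕ) : Ordinal) := by
                refine mul_le_mul_right ?_ _
                exact_mod_cast by omega
            _ ≤ omega0 ^ β * ((m + n : ℕ) : Ordinal) + c := le_self_add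
        · subst heq
          have hrlt : b' % omega0 ^ β < b₀ := by
            have h2 : omega0 ^ β * (nq : ℕ) + b' % omega0 ^ β < omega0 ^ β * (nq : ℕ) + b₀ := by
              rw [hdm]; exact hb'
            exact (add_lt_add_iff_left _).1 h2
          have hcc : a₀ ♯ b' % omega0 ^ β < c := hc ▸ nadd_lt_nadd_left hrlt a₀
          have h1 := IHc _ hcc m nq hmn a₀ _ ha hr rfl
          rw [hdm] at h1
          exact lt_of_le_of_lt h1 (add_lt_add_right hcc _)

/-- `ω ^ α` is closed under natural addition. -/
theorem nadd_lt_omega0_opow (α : Ordinal) :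
    ∀ a b : Ordinal, a < omega0 ^ α → b < omega0 ^ α → a ♯ b < omega0 ^ α := by
  induction α using Ordinal.induction with
  | h α IH =>
    intro a b ha hb
    rcases eq_or_ne a 0 with rfl | ha0
    · rwa [zero_nadd]
    rcases eq_or_ne b 0 with rfl | hb0
    · rwa [nadd_zero]
    set β := max (Ordinal.log omega0 a) (Ordinal.log omega0 b) with hβ
    have hβα : β < α := by
      rw [hβ, max_lt_iff]
      exact ⟨(Ordinal.lt_opow_iff_log_lt one_lt_omega0 ha0).1 ha,
        (Ordinal.lt_opow_iff_log_lt one_lt_omega0 hb0).1 hb⟩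
    have hsucc : omega0 ^ (Order.succ β) = omega0 ^ β * omega0 := opow_succ _ _
    have ha' : a < omega0 ^ β * omega0 := by
      rw [← hsucc]
      refine lt_of_lt_of_le (Ordinal.lt_opow_succ_log_self one_lt_omega0 a) ?_
      exact opow_le_opow_right omega0_pos (Order.succ_le_succ (le_max_left _ _))
    have hb' : b < omega0 ^ β * omega0 := by
      rw [← hsucc]
      refine lt_of_lt_of_le (Ordinal.lt_opow_succ_log_self one_lt_omega0 b) ?_
      exact opow_le_opow_right omega0_pos (Order.succ_le_succ (le_max_right _ _))
    have hne : (omega0 ^ β : Ordinal) ≠ 0 := (opow_pos β omega0_pos).ne'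
    have hdma := Ordinal.div_add_mod a (omega0 ^ β)
    have hdmb := Ordinal.div_add_mod b (omega0 ^ β)
    obtain ⟨ma, hma⟩ := Ordinal.lt_omega0.1 ((Ordinal.div_lt hne).2 ha')
    obtain ⟨mb, hmb⟩ := Ordinal.lt_omega0.1 ((Ordinal.div_lt hne).2 hb')
    rw [hma] at hdma
    rw [hmb] at hdmb
    have hra : a % omega0 ^ β < omega0 ^ β := Ordinal.mod_lt a hne
    have hrb : b % omega0 ^ β < omega0 ^ β := Ordinal.mod_lt b hne
    have key := nadd_block_le β (IH β hβα) (ma + mb) (a % omega0 ^ β ♯ b % omega0 ^ β)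
      ma mb le_rfl _ _ hra hrb rfl
    rw [hdma, hdmb] at key
    calc a ♯ b ≤ omega0 ^ β * ((ma + mb : ℕ) : Ordinal) + (a % omega0 ^ β ♯ b % omega0 ^ β) := key
      _ < omega0 ^ β * ((ma + mb : ℕ) : Ordinal) + omega0 ^ β :=
          add_lt_add_right (IH β hβα _ _ hra hrb) _
      _ = omega0 ^ β * ((ma + mb + 1 : ℕ) : Ordinal) := by push_cast [mul_add, mul_one]; rfl
      _ < omega0 ^ β * omega0 :=
          (mul_lt_mul_iff_of_pos_left (opow_pos β omega0_pos)).2 (nat_lt_omega0 _)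
      _ = omega0 ^ (Order.succ β) := hsucc.symm
      _ ≤ omega0 ^ α := opow_le_opow_right omega0_pos (Order.succ_le_of_lt hβα)

section SOTHelpers1
open scoped NaturalOps
variable {X : Type*} [LinearOrder X]

variable {X : Type*} [LinearOrder X]

def iwoInst (S : Set X) (h : S.IsWF) : IsWellOrder S (· < ·) :=
  letI : WellFoundedLT S := ⟨h⟩
  inferInstance

theorem sot_def (S : Set X) (h : S.IsWF) :
    setOrderType S = @Ordinal.type S (· < ·) (iwoInst S h) := dif_pos h

theorem sot_mono {A B : Set X} (hB : B.IsWF) (hAB : A ⊆ B) :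
    setOrderType A ≤ setOrderType B := by
  have hA := hB.mono hAB
  rw [sot_def A hA, sot_def B hB]
  letI := iwoInst A hA
  letI := iwoInst B hB
  refine Ordinal.type_le_iff'.2 ⟨⟨⟨Set.inclusion hAB, Set.inclusion_injective hAB⟩, ?_⟩⟩
  intro a b
  exact Iff.rfl

theorem sot_sep (S : Set X) (h : S.IsWF) {s : X} (hs : s ∈ S) :
    setOrderType {x | x ∈ S ∧ x < s} =
      @Ordinal.typein S (· < ·) (iwoInst S h) ⟨s, hs⟩ := by
  have h' : Set.IsWF {x | x ∈ S ∧ x < s} := h.mono fun x hx => hx.1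
  letI := iwoInst S h
  letI := iwoInst _ h'
  rw [sot_def _ h', ← Ordinal.type_subrel]
  refine Ordinal.type_eq.2 ⟨⟨⟨fun x => ⟨⟨x.1, x.2.1⟩, x.2.2⟩, fun b => ⟨b.1.1, b.1.2, b.2⟩,
    fun x => rfl, fun b => rfl⟩, Iff.rfl⟩⟩

theorem sot_sep_lt (S : Set X) (h : S.IsWF) {s : X} (hs : s ∈ S) :
    setOrderType {x | x ∈ S ∧ x < s} < setOrderType S := by
  letI := iwoInst S h
  rw [sot_sep S h hs, sot_def S h]
  exact Ordinal.typein_lt_type _ _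

theorem sot_union_le (c : Ordinal) : ∀ A B : Set X, A.IsWF → B.IsWF →
    setOrderType A ♯ setOrderType B ≤ c → setOrderType (A ∪ B) ≤ c := by
  induction c using Ordinal.induction with
  | h c IH =>
    intro A B hA hB hc
    by_contra hlt
    push_neg at hlt
    have hU : (A ∪ B).IsWF := hA.union hB
    letI := iwoInst _ hU
    rw [sot_def _ hU] at hlt
    obtain ⟨x, hx⟩ := Ordinal.typein_surj _ hlt
    have e1 : setOrderType {y | y ∈ A ∪ B ∧ y < x.1} = c := by
      rw [sot_sep _ hU x.2]; exact hx
    have hsplit : {y | y ∈ A ∪ B ∧ y < x.1} =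
        {y | y ∈ A ∧ y < x.1} ∪ {y | y ∈ B ∧ y < x.1} := by
      ext y
      simp only [Set.mem_setOf_eq, Set.mem_union]
      tauto
    have hA' : Set.IsWF {y | y ∈ A ∧ y < x.1} := hA.mono fun y hy => hy.1
    have hB' : Set.IsWF {y | y ∈ B ∧ y < x.1} := hB.mono fun y hy => hy.1
    have hlt2 : setOrderType {y | y ∈ A ∧ y < x.1} ♯ setOrderType {y | y ∈ B ∧ y < x.1} < c := by
      rcases x.2 with hxa | hxb
      · refine lt_of_le_of_lt (Ordinal.nadd_le_nadd_left (sot_mono hB fun y hy => hy.1) _) ?_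
        refine lt_of_lt_of_le (Ordinal.nadd_lt_nadd_right (sot_sep_lt A hA hxa) _) hc
      · refine lt_of_le_of_lt (Ordinal.nadd_le_nadd_right (sot_mono hA fun y hy => hy.1) _) ?_
        refine lt_of_lt_of_le (Ordinal.nadd_lt_nadd_left (sot_sep_lt B hB hxb) _) hc
    have := IH _ hlt2 _ _ hA' hB' le_rfl
    rw [← hsplit, e1] at this
    exact absurd this (not_le.2 hlt2)

theorem sot_empty : setOrderType (∅ : Set X) = 0 := by
  rw [sot_def _ Set.isWF_empty]
  letI := iwoInst (∅ : Set X) Set.isWF_empty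
  exact Ordinal.type_eq_zero_iff_isEmpty.2 inferInstance

theorem sot_surj (S : Set X) (h : S.IsWF) {o : Ordinal} (ho : o < setOrderType S) :
    ∃ s : X, s ∈ S ∧ setOrderType {x | x ∈ S ∧ x < s} = o := by
  letI := iwoInst S h
  rw [sot_def S h] at ho
  obtain ⟨x, hx⟩ := Ordinal.typein_surj _ ho
  exact ⟨x.1, x.2, by rw [sot_sep S h x.2]; exact hx⟩

end SOTHelpers1

open scoped NaturalOps in
theorem sot_iUnion_lt {X : Type*} [LinearOrder X] (W : Ordinal) (hW : 0 < W)
    (hWadd : ∀ a b : Ordinal, a < W → b < W → a ♯ b < W) :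
    ∀ (k : ℕ) (T : Fin k → Set X), (∀ i, (T i).IsWF) → (∀ i, setOrderType (T i) < W) →
      (⋃ i, T i).IsWF ∧ setOrderType (⋃ i, T i) < W := by
  intro k
  induction k with
  | zero =>
    intro T _ _
    rw [Set.iUnion_of_empty]
    exact ⟨Set.isWF_empty, by rw [sot_empty]; exact hW⟩
  | succ k IHk =>
    intro T hWF hlt
    have hsplit : ⋃ i, T i = T 0 ∪ ⋃ i : Fin k, T i.succ := by
      ext x
      simp only [Set.mem_iUnion, Set.mem_union, Fin.exists_fin_succ]
    obtain ⟨h1, h2⟩ := IHk (fun i => T i.succ) (fun i => hWF _) (fun i => hlt _)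
    rw [hsplit]
    refine ⟨(hWF 0).union h1, ?_⟩
    have h3 := sot_union_le (setOrderType (T 0) ♯ setOrderType (⋃ i : Fin k, T i.succ))
      _ _ (hWF 0) h1 le_rfl
    exact h3.trans_lt (hWadd _ _ (hlt 0) h2)

/-- Interleaving lemma: if a well-ordered subset `S` of a totally ordered set `X` is a
finite union `S = S₁ ∪ … ∪ S_k` where each `Sᵢ` has order type at most `ω^α` and every
`Sᵢ` of order type exactly `ω^α` is cofinal in `S`, then `S` has order type at most
`ω^α`; if moreover some `Sᵢ` has order type exactly `ω^α`, then `S` has order type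
exactly `ω^α`. -/
theorem orderType_le_of_interleaved_union
    {X : Type*} [LinearOrder X] (α : Ordinal) (S : Set X) (hS : S.IsWF)
    (k : ℕ) (T : Fin k → Set X) (hunion : S = ⋃ i, T i)
    (hle : ∀ i, setOrderType (T i) ≤ Ordinal.omega0 ^ α)
    (hcof : ∀ i, setOrderType (T i) = Ordinal.omega0 ^ α →
      ∀ s ∈ S, ∃ t ∈ T i, s ≤ t) :
    setOrderType S ≤ Ordinal.omega0 ^ α ∧
      ((∃ i, setOrderType (T i) = Ordinal.omega0 ^ α) →
        setOrderType S = Ordinal.omega0 ^ α) := by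
  have hW0 : (0 : Ordinal) < Ordinal.omega0 ^ α := Ordinal.opow_pos α Ordinal.omega0_pos
  have hWadd := nadd_lt_omega0_opow α
  have hTsub : ∀ i, T i ⊆ S := fun i => by rw [hunion]; exact Set.subset_iUnion T i
  have hTWF : ∀ i, (T i).IsWF := fun i => hS.mono (hTsub i)
  have hmain : setOrderType S ≤ Ordinal.omega0 ^ α := by
    by_contra hcon
    push_neg at hcon
    obtain ⟨s, hs, hseq⟩ := sot_surj S hS hcon
    have hpWF : ∀ i, Set.IsWF {x | x ∈ T i ∧ x < s} := fun i => (hTWF i).mono fun x hx => hx.1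
    have hplt : ∀ i, setOrderType {x | x ∈ T i ∧ x < s} < Ordinal.omega0 ^ α := by
      intro i
      rcases lt_or_eq_of_le (hle i) with hlt | heq
      · exact (sot_mono (hTWF i) fun x hx => hx.1).trans_lt hlt
      · obtain ⟨t, ht, hst⟩ := hcof i heq s hs
        have hsub : {x | x ∈ T i ∧ x < s} ⊆ {x | x ∈ T i ∧ x < t} :=
          fun x hx => ⟨hx.1, lt_of_lt_of_le hx.2 hst⟩
        have h2 : Set.IsWF {x | x ∈ T i ∧ x < t} := (hTWF i).mono fun x hx => hx.1
        exact (sot_mono h2 hsub).trans_lt (heq ▸ sot_sep_lt (T i) (hTWF i) ht)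
    have hsetU : {x | x ∈ S ∧ x < s} = ⋃ i, {x | x ∈ T i ∧ x < s} := by
      ext x
      simp only [Set.mem_setOf_eq, Set.mem_iUnion, hunion]
      exact exists_and_right.symm
    have hfin := (sot_iUnion_lt (Ordinal.omega0 ^ α) hW0 hWadd k
      (fun i => {x | x ∈ T i ∧ x < s}) hpWF hplt).2
    rw [← hsetU, hseq] at hfin
    exact lt_irrefl _ hfin
  refine ⟨hmain, ?_⟩
  rintro ⟨i, heq⟩
  exact le_antisymm hmain (heq ▸ sot_mono hS (hTsub i))
end

section
/- For every integer k ≥ 1, the set S_k = {(k − 1) + ⌊log₂ n⌋ − log₂ n : n a positive integer with ν₂(n) = k} is a well-ordered subset of the real numbers of order type exactly ω^(k−1). Equivalently, S_k = {(k − 1) − log₂(1 + 2^(−b₁) + … + 2^(−b_(k−1))) : 0 < b₁ < b₂ < … < b_(k−1) integers}. -/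
namespace BMD

open Finset

lemma bw_zero : binaryWeight 0 = 0 := by simp [binaryWeight]

lemma bw_two_mul (x : ℕ) : binaryWeight (2 * x) = binaryWeight x := by
  rcases Nat.eq_zero_or_pos x with rfl | hx
  · simp
  · rw [binaryWeight, Nat.digits_def' (by norm_num : 1 < 2) (by positivity)]
    simp [binaryWeight, Nat.mul_div_cancel_left _ (by norm_num : 0 < 2)]

lemma bw_two_mul_add_one (x : ℕ) : binaryWeight (2 * x + 1) = binaryWeight x + 1 := by
  rw [binaryWeight, Nat.digits_def' (by norm_num : 1 < 2) (by omega)]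
  have h1 : (2 * x + 1) % 2 = 1 := by omega
  have h2 : (2 * x + 1) / 2 = x := by omega
  rw [h1, h2]
  simp [binaryWeight, add_comm]

lemma bw_pow_add {a x : ℕ} (hx : x < 2 ^ a) : binaryWeight (2 ^ a + x) = binaryWeight x + 1 := by
  induction a generalizing x with
  | zero =>
    interval_cases x
    simp [binaryWeight]
  | succ a ih =>
    have h2a : (2 : ℕ) ^ (a + 1) = 2 * 2 ^ a := by ring
    have hx2 : x / 2 < 2 ^ a := by omega
    obtain h2 | h2 := Nat.mod_two_eq_zero_or_one x
    · have hn : 2 ^ (a + 1) + x = 2 * (2 ^ a + x / 2) := by omega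
      have hxx : x = 2 * (x / 2) := by omega
      rw [hn, bw_two_mul, ih hx2]
      conv_rhs => rw [hxx, bw_two_mul]
    · have hn : 2 ^ (a + 1) + x = 2 * (2 ^ a + x / 2) + 1 := by omega
      have hxx : x = 2 * (x / 2) + 1 := by omega
      rw [hn, bw_two_mul_add_one, ih hx2]
      conv_rhs => rw [hxx, bw_two_mul_add_one]

lemma sum_pow_lt_and_bw : ∀ (m : ℕ) (e : Fin m → ℕ), StrictAnti e → ∀ (a : ℕ), (∀ i, e i < a) →
    (∑ i, 2 ^ e i) < 2 ^ a ∧ binaryWeight (∑ i, 2 ^ e i) = m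
  | 0, e, _, a, _ => by
    simp only [Finset.univ_eq_empty, Finset.sum_empty]
    exact ⟨by positivity, bw_zero⟩
  | (m + 1), e, he, a, ha => by
    have htail : StrictAnti (fun i : Fin m => e i.succ) := fun i j hij =>
      he (Fin.succ_lt_succ_iff.2 hij)
    have hbound : ∀ i : Fin m, e i.succ < e 0 := fun i => he (Fin.succ_pos i)
    obtain ⟨h1, h2⟩ := sum_pow_lt_and_bw m _ htail (e 0) hbound
    rw [Fin.sum_univ_succ]
    constructor
    · calc 2 ^ e 0 + ∑ i : Fin m, 2 ^ e i.succ < 2 ^ e 0 + 2 ^ e 0 := by omega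
        _ = 2 ^ (e 0 + 1) := by ring
        _ ≤ 2 ^ a := Nat.pow_le_pow_right (by norm_num) (ha 0)
    · rw [bw_pow_add h1, h2]

lemma bw_eq_length (n : ℕ) : binaryWeight n = n.bitIndices.length := by
  induction n using Nat.binaryRec with
  | zero => simp [bw_zero]
  | bit b x ih =>
    cases b
    · rw [Nat.bit_false, Nat.bitIndices_two_mul, bw_two_mul, List.length_map]
      exact ih
    · rw [Nat.bit_true, Nat.bitIndices_two_mul_add_one, bw_two_mul_add_one]
      simp [ih]

lemma decomp (n : ℕ) (hn : 0 < n) :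
    ∃ e : Fin (binaryWeight n) → ℕ, StrictAnti e ∧ n = ∑ i, 2 ^ e i := by
  have hlen : binaryWeight n = n.bitIndices.length := bw_eq_length n
  have hs : n.bitIndices.SortedLT := Nat.bitIndices_sorted
  refine ⟨fun i => n.bitIndices.get ((Fin.cast hlen i).rev), ?_, ?_⟩
  · intro i j hij
    exact hs.strictMono_get (by simp [Fin.lt_def, Fin.rev]; omega)
  · have h1 : n.bitIndices.map (2 ^ ·) = List.ofFn (fun i => 2 ^ n.bitIndices.get i) := by
      conv_lhs => rw [← List.ofFn_get n.bitIndices]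
      rw [List.map_ofFn]
      rfl
    have h2 := Nat.twoPowSum_bitIndices n
    rw [h1, List.sum_ofFn] at h2
    have h3 : ∑ i : Fin (binaryWeight n), 2 ^ n.bitIndices.get ((Fin.cast hlen i).rev) =
        ∑ i : Fin n.bitIndices.length, 2 ^ n.bitIndices.get i :=
      Fintype.sum_equiv ((finCongr hlen).trans Fin.revPerm) _ _ (fun i => rfl)
    exact h2.symm.trans h3.symm


open Finset

lemma engine (m a : ℕ) (b : Fin m → ℕ) (hmono : StrictMono b) (hpos : ∀ i, 0 < b i)
    (hle : ∀ i, b i ≤ a) :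
    0 < 2 ^ a + ∑ i, 2 ^ (a - b i) ∧
      binaryWeight (2 ^ a + ∑ i, 2 ^ (a - b i)) = m + 1 ∧
      Nat.log 2 (2 ^ a + ∑ i, 2 ^ (a - b i)) = a := by
  have he : StrictAnti (fun i => a - b i) := fun i j hij => by
    have h1 := hmono hij; have h2 := hle j; have h3 := hpos i
    simp only []
    omega
  have ha : ∀ i, a - b i < a := fun i => by
    have := hpos i; have := hle i; omega
  obtain ⟨h1, h2⟩ := sum_pow_lt_and_bw m _ he a ha
  refine ⟨by positivity, ?_, ?_⟩
  · rw [bw_pow_add h1, h2]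
  · exact Nat.log_eq_of_pow_le_of_lt_pow (Nat.le_add_right _ _) (by rw [pow_succ]; omega)

lemma real_cast_eq (m a : ℕ) (b : Fin m → ℕ) (hle : ∀ i, b i ≤ a) :
    ((2 ^ a + ∑ i, 2 ^ (a - b i) : ℕ) : ℝ) = 2 ^ a * (1 + ∑ i, ((2 : ℝ) ^ (b i))⁻¹) := by
  push_cast
  rw [mul_add, mul_one, Finset.mul_sum]
  congr 1
  refine Finset.sum_congr rfl fun i _ => ?_
  have h : (2 : ℝ) ^ a = 2 ^ (a - b i) * 2 ^ (b i) := by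
    rw [← pow_add]; congr 1; have := hle i; omega
  rw [h]
  field_simp

lemma logb_eq (m a : ℕ) (b : Fin m → ℕ) (hle : ∀ i, b i ≤ a) :
    Real.logb 2 ((2 ^ a + ∑ i, 2 ^ (a - b i) : ℕ) : ℝ) =
      a + Real.logb 2 (1 + ∑ i, ((2 : ℝ) ^ (b i))⁻¹) := by
  have hpos : (0 : ℝ) < 1 + ∑ i, ((2 : ℝ) ^ (b i))⁻¹ := by positivity
  rw [real_cast_eq m a b hle, Real.logb_mul (by positivity) (by positivity), Real.logb_pow]
  simp

lemma tail_bound : ∀ (m : ℕ) (c : Fin (m + 1) → ℕ), StrictMono c →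
    ∑ i, ((2 : ℝ) ^ (c i))⁻¹ < 2 * ((2 : ℝ) ^ (c 0))⁻¹
  | 0, c, _ => by
    rw [Fin.sum_univ_one]
    have : (0:ℝ) < ((2 : ℝ) ^ (c 0))⁻¹ := by positivity
    linarith
  | (m + 1), c, hc => by
    have htail := tail_bound m (fun i => c i.succ) (fun i j hij => hc (Fin.succ_lt_succ_iff.2 hij))
    simp only [Fin.succ_zero_eq_one] at htail
    rw [Fin.sum_univ_succ]
    have h1 : c 0 + 1 ≤ c 1 := hc (by simp [Fin.lt_def])
    have hA : ((2 : ℝ) ^ (c 1))⁻¹ ≤ ((2 : ℝ) ^ (c 0 + 1))⁻¹ := by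
      apply inv_anti₀ (by positivity)
      exact pow_le_pow_right₀ (by norm_num) h1
    have hB : ((2 : ℝ) ^ (c 0 + 1))⁻¹ = ((2 : ℝ) ^ (c 0))⁻¹ / 2 := by
      rw [pow_succ]; field_simp
    linarith

lemma sum_lt_of_lex : ∀ (m : ℕ) (b b' : Fin m → ℕ), StrictMono b → StrictMono b' →
    (∃ i, (∀ j, j < i → b j = b' j) ∧ b i < b' i) →
    ∑ i, ((2 : ℝ) ^ (b' i))⁻¹ < ∑ i, ((2 : ℝ) ^ (b i))⁻¹
  | 0, _, _, _, _, h => absurd h (by rintro ⟨i, -⟩; exact i.elim0)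
  | (m + 1), b, b', hb, hb', ⟨i, hji, hii⟩ => by
    rcases Fin.eq_zero_or_eq_succ i with rfl | ⟨j, rfl⟩
    · have h1 : ∑ i, ((2 : ℝ) ^ (b' i))⁻¹ < 2 * ((2 : ℝ) ^ (b' 0))⁻¹ := tail_bound m b' hb'
      have h2 : 2 * ((2 : ℝ) ^ (b' 0))⁻¹ ≤ ((2 : ℝ) ^ (b 0))⁻¹ := by
        have hA : ((2 : ℝ) ^ (b' 0))⁻¹ ≤ ((2 : ℝ) ^ (b 0 + 1))⁻¹ := by
          apply inv_anti₀ (by positivity)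
          exact pow_le_pow_right₀ (by norm_num) hii
        have hB : ((2 : ℝ) ^ (b 0 + 1))⁻¹ = ((2 : ℝ) ^ (b 0))⁻¹ / 2 := by
          rw [pow_succ]; field_simp
        linarith
      have h3 : ((2 : ℝ) ^ (b 0))⁻¹ ≤ ∑ i, ((2 : ℝ) ^ (b i))⁻¹ :=
        Finset.single_le_sum (f := fun i => ((2 : ℝ) ^ (b i))⁻¹)
          (fun i _ => by positivity) (Finset.mem_univ 0)
      linarith
    · have h0 : b 0 = b' 0 := hji 0 (Fin.succ_pos j)
      have hrec := sum_lt_of_lex m (fun i => b i.succ) (fun i => b' i.succ)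
        (fun p q hpq => hb (Fin.succ_lt_succ_iff.2 hpq))
        (fun p q hpq => hb' (Fin.succ_lt_succ_iff.2 hpq))
        ⟨j, fun l hl => hji l.succ (Fin.succ_lt_succ_iff.2 hl), hii⟩
      rw [Fin.sum_univ_succ, Fin.sum_univ_succ, h0]
      exact add_lt_add_right hrec _


noncomputable instance lamWO (m : ℕ) : IsWellOrder (Lex (Fin m → ℕ)) (· < ·) where
  trichotomous := (Pi.isTrichotomous_lex _ _
    (wellFounded_lt : WellFounded ((· < ·) : Fin m → Fin m → Prop))).trichotomous
  wf := Pi.Lex.wellFounded (· < ·)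
    (fun _ => (wellFounded_lt : WellFounded ((· < ·) : ℕ → ℕ → Prop)))

lemma lam_lt_iff {m : ℕ} (a b : Lex (Fin (m + 1) → ℕ)) :
    a < b ↔ (ofLex a 0 < ofLex b 0 ∨ (ofLex a 0 = ofLex b 0 ∧
      toLex (fun i : Fin m => ofLex a i.succ) < toLex (fun i : Fin m => ofLex b i.succ))) := by
  constructor
  · rintro ⟨i, hj, hi⟩
    rcases Fin.eq_zero_or_eq_succ i with rfl | ⟨j, rfl⟩
    · exact Or.inl hi
    · exact Or.inr ⟨hj 0 (Fin.succ_pos j),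
        ⟨j, fun l hl => hj l.succ (Fin.succ_lt_succ_iff.2 hl), hi⟩⟩
  · rintro (h | ⟨h0, ⟨j, hj, hjlt⟩⟩)
    · exact ⟨0, fun j hj => absurd hj (Fin.not_lt_zero j), h⟩
    · refine ⟨j.succ, fun l hl => ?_, hjlt⟩
      rcases Fin.eq_zero_or_eq_succ l with rfl | ⟨l', rfl⟩
      · exact h0
      · exact hj l' (Fin.succ_lt_succ_iff.1 hl)

noncomputable def consRelIso (m : ℕ) :
    ((· < ·) : Lex (Fin (m + 1) → ℕ) → Lex (Fin (m + 1) → ℕ) → Prop) ≃r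
      Prod.Lex ((· < ·) : ℕ → ℕ → Prop)
        ((· < ·) : Lex (Fin m → ℕ) → Lex (Fin m → ℕ) → Prop) where
  toEquiv := {
    toFun := fun a => (ofLex a 0, toLex (fun i : Fin m => ofLex a i.succ))
    invFun := fun p => toLex (Fin.cons p.1 (ofLex p.2))
    left_inv := fun a => by
      apply toLex.symm.injective
      exact funext fun i => Fin.cases rfl (fun j => rfl) i
    right_inv := fun p => Prod.ext rfl rfl }
  map_rel_iff' := by
    intro a b
    rw [Prod.lex_def, lam_lt_iff]
    rfl

theorem type_lam : ∀ m : ℕ,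
    Ordinal.type ((· < ·) : Lex (Fin m → ℕ) → Lex (Fin m → ℕ) → Prop) =
      Ordinal.omega0 ^ (m : Ordinal)
  | 0 => by
    have hu : Unique (Lex (Fin 0 → ℕ)) := Equiv.unique ofLex
    rw [show ((0 : ℕ) : Ordinal) = 0 by simp, Ordinal.opow_zero]
    exact Ordinal.type_eq_one_iff_unique.2 ⟨hu⟩
  | (m + 1) => by
    rw [Ordinal.type_eq.2 ⟨consRelIso m⟩, Ordinal.type_prod_lex, type_lam m,
      Ordinal.type_nat_lt]
    rw [show ((m + 1 : ℕ) : Ordinal) = (m : Ordinal) + 1 by push_cast; ring,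
      Ordinal.opow_add, Ordinal.opow_one]


def sig (m : ℕ) (c : Fin m → ℕ) : Fin m → ℕ :=
  fun i => ∑ j ∈ Finset.univ.filter (· ≤ i), (c j + 1)

lemma sig_strictMono (m : ℕ) (c : Fin m → ℕ) : StrictMono (sig m c) := by
  intro i j hij
  refine Finset.sum_lt_sum_of_subset (i := j) ?_ (by simp) (by simp [not_le.2 hij]) (by omega)
    (fun l _ _ => by omega)
  intro l hl
  simp only [Finset.mem_filter, Finset.mem_univ, true_and] at *
  exact hl.trans hij.le

lemma sig_pos (m : ℕ) (c : Fin m → ℕ) (i : Fin m) : 0 < sig m c i := by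
  have h : c i + 1 ≤ sig m c i :=
    Finset.single_le_sum (f := fun j : Fin m => c j + 1) (fun l _ => by omega)
      (by simp : i ∈ Finset.univ.filter (· ≤ i))
  omega

lemma sig_lex (m : ℕ) (c c' : Fin m → ℕ) (i : Fin m)
    (hj : ∀ j, j < i → c j = c' j) (hi : c i < c' i) :
    (∀ j, j < i → sig m c j = sig m c' j) ∧ sig m c i < sig m c' i := by
  constructor
  · intro j hji
    apply Finset.sum_congr rfl
    intro l hl
    simp only [Finset.mem_filter, Finset.mem_univ, true_and] at hl
    rw [hj l (lt_of_le_of_lt hl hji)]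
  · apply Finset.sum_lt_sum
    · intro l hl
      simp only [Finset.mem_filter, Finset.mem_univ, true_and] at hl
      rcases lt_or_eq_of_le hl with h | h
      · rw [hj l h]
      · subst h; omega
    · exact ⟨i, by simp, by omega⟩

lemma sig_surj (m : ℕ) (b : Fin m → ℕ) (hmono : StrictMono b) (hpos : ∀ i, 0 < b i) :
    ∃ c, sig m c = b := by
  refine ⟨fun i => b i - (if h : (i : ℕ) = 0 then 0 else b ⟨(i : ℕ) - 1, by omega⟩) - 1, ?_⟩
  funext i
  obtain ⟨v, hv⟩ := i
  induction v with
  | zero =>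
    have hfilter : Finset.univ.filter (· ≤ (⟨0, hv⟩ : Fin m)) = {⟨0, hv⟩} := by
      ext l
      simp only [Finset.mem_filter, Finset.mem_univ, true_and, Finset.mem_singleton,
        Fin.le_def, Fin.ext_iff]
      omega
    have h0 := hpos ⟨0, hv⟩
    simp [sig, hfilter]
    omega
  | succ v ih =>
    have hv' : v < m := by omega
    have hfilter : Finset.univ.filter (· ≤ (⟨v + 1, hv⟩ : Fin m)) =
        insert (⟨v + 1, hv⟩ : Fin m) (Finset.univ.filter (· ≤ (⟨v, hv'⟩ : Fin m))) := by
      ext l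
      simp only [Finset.mem_filter, Finset.mem_univ, true_and, Finset.mem_insert,
        Fin.le_def, Fin.ext_iff]
      omega
    have hnotmem : (⟨v + 1, hv⟩ : Fin m) ∉ Finset.univ.filter (· ≤ (⟨v, hv'⟩ : Fin m)) := by
      simp [Fin.le_def]
    have hlt : b ⟨v, hv'⟩ < b ⟨v + 1, hv⟩ := hmono (by simp [Fin.lt_def])
    have hstep : sig m (fun i => b i - (if h : (i : ℕ) = 0 then 0
        else b ⟨(i : ℕ) - 1, by omega⟩) - 1) ⟨v + 1, hv⟩ =
        (b ⟨v + 1, hv⟩ - b ⟨v, hv'⟩ - 1 + 1) + sig m (fun i => b i - (if h : (i : ℕ) = 0 then 0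
        else b ⟨(i : ℕ) - 1, by omega⟩) - 1) ⟨v, hv'⟩ := by
      rw [sig, hfilter, Finset.sum_insert hnotmem]
      rfl
    rw [hstep, ih hv']
    omega


lemma memS_iff (m : ℕ) (C : ℝ) (d : ℝ) :
    (∃ n : ℕ, 0 < n ∧ binaryWeight n = m + 1 ∧
        d = C + (Nat.log 2 n : ℝ) - Real.logb 2 n) ↔
    (∃ b : Fin m → ℕ, StrictMono b ∧ (∀ i, 0 < b i) ∧
        d = C - Real.logb 2 (1 + ∑ i, ((2 : ℝ) ^ (b i))⁻¹)) := by
  constructor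
  · rintro ⟨n, hn, hw, rfl⟩
    obtain ⟨e, he, hne⟩ := decomp n hn
    set e' : Fin (m + 1) → ℕ := fun i => e (Fin.cast hw.symm i) with he'def
    have he' : StrictAnti e' := fun i j hij =>
      he (show Fin.cast hw.symm i < Fin.cast hw.symm j from hij)
    have hsum : n = ∑ i : Fin (m + 1), 2 ^ e' i := by
      rw [hne]
      exact Fintype.sum_equiv (finCongr hw) _ _ (fun i => rfl)
    set a := e' 0 with hadef
    set b : Fin m → ℕ := fun i => a - e' i.succ with hbdef
    have hsucclt : ∀ i : Fin m, e' i.succ < a := fun i => he' (Fin.succ_pos i)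
    have hmono : StrictMono b := fun i j hij => by
      have h1 : e' j.succ < e' i.succ := he' (Fin.succ_lt_succ_iff.2 hij)
      have h2 := hsucclt i
      simp only [hbdef]
      omega
    have hpos : ∀ i, 0 < b i := fun i => by
      have := hsucclt i
      simp only [hbdef]
      omega
    have hle : ∀ i, b i ≤ a := fun i => by simp only [hbdef]; omega
    have hneq : n = 2 ^ a + ∑ i : Fin m, 2 ^ (a - b i) := by
      rw [hsum, Fin.sum_univ_succ]
      congr 1
      refine Finset.sum_congr rfl fun i _ => ?_
      have := hsucclt i
      congr 1
      simp only [hbdef]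
      omega
    obtain ⟨-, -, hlog⟩ := engine m a b hmono hpos hle
    have h1 : Nat.log 2 n = a := by rw [hneq]; exact hlog
    have h2 : Real.logb 2 (n : ℝ) =
        a + Real.logb 2 (1 + ∑ i, ((2 : ℝ) ^ (b i))⁻¹) := by
      rw [hneq]; exact logb_eq m a b hle
    refine ⟨b, hmono, hpos, ?_⟩
    rw [h1, h2]
    ring
  · rintro ⟨b, hmono, hpos, rfl⟩
    set a := Finset.univ.sup b with hadef
    have hle : ∀ i, b i ≤ a := fun i => Finset.le_sup (Finset.mem_univ i)
    obtain ⟨hpos', hw, hlog⟩ := engine m a b hmono hpos hle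
    refine ⟨2 ^ a + ∑ i, 2 ^ (a - b i), hpos', hw, ?_⟩
    rw [hlog, logb_eq m a b hle]
    ring

noncomputable def Gfun (m : ℕ) (C : ℝ) (c : Lex (Fin m → ℕ)) : ℝ :=
  C - Real.logb 2 (1 + ∑ i, ((2 : ℝ) ^ (sig m (ofLex c) i))⁻¹)

lemma G_strictMono (m : ℕ) (C : ℝ) {c c' : Lex (Fin m → ℕ)} (h : c < c') :
    Gfun m C c < Gfun m C c' := by
  obtain ⟨i, hj, hi⟩ := h
  obtain ⟨hj', hi'⟩ := sig_lex m (ofLex c) (ofLex c') i hj hi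
  have hsum := sum_lt_of_lex m (sig m (ofLex c)) (sig m (ofLex c'))
    (sig_strictMono m _) (sig_strictMono m _) ⟨i, hj', hi'⟩
  have hpos : (0 : ℝ) < 1 + ∑ i, ((2 : ℝ) ^ (sig m (ofLex c') i))⁻¹ := by positivity
  have hlb : Real.logb 2 (1 + ∑ i, ((2 : ℝ) ^ (sig m (ofLex c') i))⁻¹) <
      Real.logb 2 (1 + ∑ i, ((2 : ℝ) ^ (sig m (ofLex c) i))⁻¹) :=
    Real.logb_lt_logb (by norm_num : (1 : ℝ) < 2) hpos (by linarith)
  simp only [Gfun]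
  linarith

lemma B_mem_iff (m : ℕ) (C : ℝ) (d : ℝ) :
    (∃ b : Fin m → ℕ, StrictMono b ∧ (∀ i, 0 < b i) ∧
      d = C - Real.logb 2 (1 + ∑ i, ((2 : ℝ) ^ (b i))⁻¹)) ↔
    ∃ c : Lex (Fin m → ℕ), Gfun m C c = d := by
  constructor
  · rintro ⟨b, hmono, hpos, rfl⟩
    obtain ⟨cc, hcc⟩ := sig_surj m b hmono hpos
    exact ⟨toLex cc, by simp only [Gfun, ofLex_toLex, hcc]⟩
  · rintro ⟨c, rfl⟩
    exact ⟨sig m (ofLex c), sig_strictMono m _, sig_pos m _, rfl⟩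


lemma B_isWF_and_type (m : ℕ) (C : ℝ) :
    ({d : ℝ | ∃ b : Fin m → ℕ, StrictMono b ∧ (∀ i, 0 < b i) ∧
        d = C - Real.logb 2 (1 + ∑ i, ((2 : ℝ) ^ (b i))⁻¹)} : Set ℝ).IsWF ∧
      setOrderType {d : ℝ | ∃ b : Fin m → ℕ, StrictMono b ∧ (∀ i, 0 < b i) ∧
        d = C - Real.logb 2 (1 + ∑ i, ((2 : ℝ) ^ (b i))⁻¹)} =
        Ordinal.omega0 ^ (m : Ordinal) := by
  set B : Set ℝ := {d : ℝ | ∃ b : Fin m → ℕ, StrictMono b ∧ (∀ i, 0 < b i) ∧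
        d = C - Real.logb 2 (1 + ∑ i, ((2 : ℝ) ^ (b i))⁻¹)} with hBdef
  have hmem : ∀ d, d ∈ B ↔ ∃ c : Lex (Fin m → ℕ), Gfun m C c = d := fun d => B_mem_iff m C d
  have hGinj : Function.Injective (Gfun m C) := by
    intro c c' hcc
    rcases trichotomous_of ((· < ·) : Lex (Fin m → ℕ) → Lex (Fin m → ℕ) → Prop) c c'
      with h | h | h
    · exact absurd hcc (ne_of_lt (G_strictMono m C h))
    · exact h
    · exact absurd hcc.symm (ne_of_lt (G_strictMono m C h))
  let g : Lex (Fin m → ℕ) → B := fun c => ⟨Gfun m C c, (hmem _).2 ⟨c, rfl⟩⟩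
  have hgbij : Function.Bijective g := by
    constructor
    · intro c c' h
      exact hGinj (congrArg Subtype.val h)
    · rintro ⟨d, hd⟩
      obtain ⟨c, hc⟩ := (hmem d).1 hd
      exact ⟨c, Subtype.ext hc⟩
  have iso : ((· < ·) : Lex (Fin m → ℕ) → Lex (Fin m → ℕ) → Prop) ≃r
      ((· < ·) : B → B → Prop) := by
    refine ⟨Equiv.ofBijective g hgbij, @fun c c' => ?_⟩
    show (Gfun m C c < Gfun m C c') ↔ c < c'
    constructor
    · intro h
      rcases trichotomous_of ((· < ·) : Lex (Fin m → ℕ) → Lex (Fin m → ℕ) → Prop) c c'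
        with h' | h' | h'
      · exact h'
      · exact absurd (h' ▸ h) (lt_irrefl _)
      · exact absurd (G_strictMono m C h') (not_lt.2 h.le)
    · exact fun h => G_strictMono m C h
  have hwf : WellFounded ((· < ·) : B → B → Prop) :=
    iso.symm.toRelEmbedding.wellFounded (lamWO m).wf
  have hIsWF : B.IsWF := hwf
  refine ⟨hIsWF, ?_⟩
  unfold setOrderType
  rw [dif_pos hIsWF]
  haveI : WellFoundedLT B := ⟨hIsWF⟩
  exact (Ordinal.type_eq.2 ⟨iso.symm⟩).trans (type_lam m)

end BMD

/-- For `k ≥ 1`, the set `S_k = {(k-1) + ⌊log₂ n⌋ - log₂ n : ν₂(n) = k}` is a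
well-ordered subset of `ℝ` of order type exactly `ω^(k-1)`; equivalently, `S_k` equals
`{(k-1) - log₂(1 + 2^(-b₁) + … + 2^(-b_(k-1))) : 0 < b₁ < … < b_(k-1) integers}`. -/
theorem binary_method_defect_set_orderType
    (k : ℕ) (hk : 1 ≤ k) :
    {d : ℝ | ∃ n : ℕ, 0 < n ∧ binaryWeight n = k ∧
        d = ((k : ℝ) - 1) + (Nat.log 2 n : ℝ) - Real.logb 2 n}.IsWF ∧
    setOrderType {d : ℝ | ∃ n : ℕ, 0 < n ∧ binaryWeight n = k ∧
        d = ((k : ℝ) - 1) + (Nat.log 2 n : ℝ) - Real.logb 2 n} =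
      Ordinal.omega0 ^ ((k - 1 : ℕ) : Ordinal) ∧
    {d : ℝ | ∃ n : ℕ, 0 < n ∧ binaryWeight n = k ∧
        d = ((k : ℝ) - 1) + (Nat.log 2 n : ℝ) - Real.logb 2 n} =
      {d : ℝ | ∃ b : Fin (k - 1) → ℕ, StrictMono b ∧ (∀ i, 0 < b i) ∧
        d = ((k : ℝ) - 1) -
          Real.logb 2 (1 + ∑ i : Fin (k - 1), ((2 : ℝ) ^ (b i))⁻¹)} := by
  obtain ⟨m, rfl⟩ : ∃ m, k = m + 1 := ⟨k - 1, by omega⟩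
  simp only [Nat.add_sub_cancel]
  have key3 := Set.ext fun d => BMD.memS_iff m (((m + 1 : ℕ) : ℝ) - 1) d
  obtain ⟨h1, h2⟩ := BMD.B_isWF_and_type m (((m + 1 : ℕ) : ℝ) - 1)
  rw [key3]
  exact ⟨h1, h2, rfl⟩
end

section
/- Let A be an admissible set of addition chains. Then the order type of 𝒟^A ∩ [0, 1] is ω, while for any real r < 1 the set 𝒟^A ∩ [0, r] is finite. Furthermore, every positive integer n with δ^A(n) ≤ 1 is A-stable, so every defect in 𝒟^A ∩ [0, 1] is an A-stable defect and the order type of 𝒟^A_st ∩ [0, 1] is also ω. -/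
lemma chain_le {c : List ℕ} (hc : IsAdditionChain c) :
    ∀ k, k < c.length → c.getD k 0 ≤ 2 ^ k := by
  intro k
  induction k using Nat.strong_induction_on with
  | _ k ih =>
    intro hk
    rcases Nat.eq_zero_or_pos k with rfl | hk0
    · have h0 := hc.1; simpa using h0.le
    · obtain ⟨i, j, hi, hj, he⟩ := hc.2 k hk0 hk
      have h1 := ih i hi (lt_trans hi hk)
      have h2 := ih j hj (lt_trans hj hk)
      have : c.getD k 0 ≤ 2 ^ i + 2 ^ j := by omega
      have hik : 2 ^ i ≤ 2 ^ (k - 1) := Nat.pow_le_pow_right (by norm_num) (by omega)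
      have hjk : 2 ^ j ≤ 2 ^ (k - 1) := Nat.pow_le_pow_right (by norm_num) (by omega)
      have : 2 ^ (k - 1) + 2 ^ (k - 1) = 2 ^ k := by
        rw [← two_mul, ← pow_succ']
        congr 1; omega
      omega

lemma chain_pos {c : List ℕ} (hc : IsAdditionChain c) :
    ∀ k, k < c.length → 1 ≤ c.getD k 0 := by
  intro k
  induction k using Nat.strong_induction_on with
  | _ k ih =>
    intro hk
    rcases Nat.eq_zero_or_pos k with rfl | hk0
    · have h0 := hc.1; omega
    · obtain ⟨i, j, hi, hj, he⟩ := hc.2 k hk0 hk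
      have h1 := ih i hi (lt_trans hi hk)
      omega


lemma pow2_lt_iff {m n : ℕ} : (2:ℕ) ^ m < 2 ^ n ↔ m < n :=
  Nat.pow_lt_pow_iff_right (by norm_num)

lemma chain_struct {c : List ℕ} (hc : IsAdditionChain c) :
    ∀ k, k < c.length →
      (c.getD k 0 = 2 ^ k → ∀ t ≤ k, c.getD t 0 = 2 ^ t) ∧
      (∀ m, k = m + 1 → 2 ^ m < c.getD k 0 → ∃ b ≤ m, c.getD k 0 = 2 ^ m + 2 ^ b) := by
  intro k
  induction k using Nat.strong_induction_on with
  | _ k ih =>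
    intro hk
    rcases Nat.eq_zero_or_pos k with rfl | hk0
    · constructor
      · intro _ t ht
        interval_cases t
        simpa using hc.1
      · intro m hm; omega
    · obtain ⟨m, rfl⟩ : ∃ m, k = m + 1 := ⟨k - 1, by omega⟩
      obtain ⟨i, j, hi, hj, he⟩ := hc.2 (m + 1) hk0 hk
      -- make getD j ≤ getD i
      obtain ⟨i, j, hi, hj, he, hij⟩ :
          ∃ i j, i < m + 1 ∧ j < m + 1 ∧
            c.getD (m+1) 0 = c.getD i 0 + c.getD j 0 ∧ c.getD j 0 ≤ c.getD i 0 := by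
        rcases le_total (c.getD j 0) (c.getD i 0) with h | h
        · exact ⟨i, j, hi, hj, he, h⟩
        · exact ⟨j, i, hj, hi, by omega, h⟩
      have hilen : i < c.length := by omega
      have hjlen : j < c.length := by omega
      have hai : c.getD i 0 ≤ 2 ^ i := chain_le hc i hilen
      have haj : c.getD j 0 ≤ 2 ^ j := chain_le hc j hjlen
      have haim : (2:ℕ) ^ i ≤ 2 ^ m := Nat.pow_le_pow_right (by norm_num) (by omega)
      have hajm : (2:ℕ) ^ j ≤ 2 ^ m := Nat.pow_le_pow_right (by norm_num) (by omega)
      have hsplit : (2:ℕ) ^ (m+1) = 2 ^ m + 2 ^ m := by rw [pow_succ]; ring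
      constructor
      · -- clause 1
        intro hak t ht
        have him : c.getD i 0 = 2 ^ m ∧ c.getD j 0 = 2 ^ m := by omega
        have hieq : i = m := by
          have : (2:ℕ) ^ m ≤ 2 ^ i := him.1 ▸ hai
          have := pow2_lt_iff (m := i) (n := m)
          omega
        have ham : c.getD m 0 = 2 ^ m := hieq ▸ him.1
        rcases Nat.lt_or_ge t (m + 1) with ht' | ht'
        · exact (ih m (by omega) (by omega)).1 ham t (by omega)
        · have : t = m + 1 := by omega
          rw [this]; exact hak
      · -- clause 2
        rintro m' hm' hbig
        have hmeq : m' = m := by omega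
        rw [hmeq] at hbig ⊢
        -- i = m
        have hi2 : 2 * c.getD i 0 ≥ c.getD (m+1) 0 := by omega
        have hieq : m = i := by
          have h1 : (2:ℕ) ^ m < 2 ^ (i + 1) := by
            have : (2:ℕ) ^ (i+1) = 2 ^ i + 2 ^ i := by rw [pow_succ]; ring
            omega
          have := pow2_lt_iff.mp h1
          omega
        subst hieq
        rcases Nat.eq_zero_or_pos m with rfl | hm0
        · -- m = 0
          have hj0 : j = 0 := by omega
          have ha0 : c.getD 0 0 = 1 := hc.1
          refine ⟨0, le_refl _, ?_⟩
          subst hj0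
          simp only [pow_zero, pow_one] at *
          omega
        · obtain ⟨mm, rfl⟩ : ∃ mm, m = mm + 1 := ⟨m - 1, by omega⟩
          have hsplit2 : (2:ℕ) ^ (mm+1) = 2 ^ mm + 2 ^ mm := by rw [pow_succ]; ring
          have hmlen : mm + 1 < c.length := by omega
          have hmm : 2 ^ mm < c.getD (mm+1) 0 := by omega
          obtain ⟨b, hb, hab⟩ := (ih (mm+1) (by omega) hmlen).2 mm rfl hmm
          rcases Nat.eq_or_lt_of_le hb with hbe | hblt
          · -- b = mm : a m = 2^m, all earlier are powers of 2
            rw [hbe] at hab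
            have ham : c.getD (mm+1) 0 = 2 ^ (mm+1) := by omega
            have hallpow := (ih (mm+1) (by omega) hmlen).1 ham
            have haje : c.getD j 0 = 2 ^ j := hallpow j (by omega)
            exact ⟨j, by omega, by omega⟩
          · -- b < mm
            rcases Nat.eq_or_lt_of_le (Nat.le_of_lt_succ hj) with hjm | hjm
            · -- j = m : doubling step
              refine ⟨b + 1, by omega, ?_⟩
              have : c.getD j 0 = c.getD (mm+1) 0 := by rw [hjm]
              have hsb : (2:ℕ) ^ (b+1) = 2 ^ b + 2 ^ b := by rw [pow_succ]; ring
              omega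
            · -- j ≤ mm
              have hbmm : (2:ℕ) ^ b ≤ 2 ^ (mm - 1) :=
                Nat.pow_le_pow_right (by norm_num) (by omega)
              have hmm1 : mm - 1 + 1 = mm := by omega
              have hsplit3 : (2:ℕ) ^ mm = 2 ^ (mm-1) + 2 ^ (mm-1) := by
                rw [← two_mul, ← pow_succ']; congr 1; omega
              -- a j > 2^(mm-1), hence j = mm
              have hjbig : 2 ^ (mm - 1) < c.getD j 0 := by omega
              have hjeq : mm = j := by
                have h1 : (2:ℕ) ^ (mm-1) < 2 ^ j := by omega
                have := pow2_lt_iff.mp h1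
                omega
              subst hjeq
              obtain ⟨nn, rfl⟩ : ∃ nn, mm = nn + 1 := ⟨mm - 1, by omega⟩
              have hnnlt : 2 ^ nn < c.getD (nn+1) 0 := by
                have : (2:ℕ) ^ (nn+1-1) = 2 ^ nn := by norm_num
                omega
              obtain ⟨b', hb', hab'⟩ :=
                (ih (nn+1) (by omega) (by omega)).2 nn rfl hnnlt
              have hsplit4 : (2:ℕ) ^ (nn+1) = 2 ^ nn + 2 ^ nn := by rw [pow_succ]; ring
              rcases Nat.eq_or_lt_of_le hb' with hbe' | hblt'
              · -- b' = nn
                rw [hbe'] at hab'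
                exact ⟨b, by omega, by omega⟩
              · rcases Nat.eq_or_lt_of_le (by omega : b ≤ nn) with hbe2 | hbnn
                · -- b = nn
                  rw [hbe2] at hab
                  exact ⟨b', by omega, by omega⟩
                · -- b < nn and b' < nn : contradiction
                  exfalso
                  have h1 : (2:ℕ) ^ b ≤ 2 ^ (nn-1) :=
                    Nat.pow_le_pow_right (by norm_num) (by omega)
                  have h2 : (2:ℕ) ^ b' ≤ 2 ^ (nn-1) :=
                    Nat.pow_le_pow_right (by norm_num) (by omega)
                  have hnn1 : nn - 1 + 1 = nn := by omega
                  have hsplit5 : (2:ℕ) ^ nn = 2 ^ (nn-1) + 2 ^ (nn-1) := by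
                    rw [← two_mul, ← pow_succ']; congr 1; omega
                  omega


lemma bw_two_mul (n : ℕ) (hn : 0 < n) : binaryWeight (2 * n) = binaryWeight n := by
  unfold binaryWeight
  rw [Nat.digits_def' (by norm_num : 1 < 2) (by omega)]
  simp [Nat.mul_div_cancel_left, Nat.mul_mod_right]

lemma bw_pow (a : ℕ) : binaryWeight (2 ^ a) = 1 := by
  induction a with
  | zero => simp [binaryWeight]
  | succ a ih => rw [pow_succ, mul_comm, bw_two_mul _ (by positivity)]; exact ih

lemma bw_pow_mul (b m : ℕ) (hm : 0 < m) : binaryWeight (2 ^ b * m) = binaryWeight m := by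
  induction b with
  | zero => simp
  | succ b ih =>
      rw [pow_succ, mul_comm (2^b) 2, mul_assoc, bw_two_mul _ (by positivity)]
      exact ih

lemma bw_two_pows {a b : ℕ} (h : b < a) : binaryWeight (2 ^ a + 2 ^ b) = 2 := by
  have : 2 ^ a + 2 ^ b = 2 ^ b * (2 ^ (a - b) + 1) := by
    rw [mul_add, mul_one, ← pow_add]
    congr 2
    omega
  rw [this, bw_pow_mul _ _ (by positivity)]
  have hd : 0 < a - b := by omega
  unfold binaryWeight
  rw [Nat.digits_def' (by norm_num : 1 < 2) (by positivity)]
  have h1 : (2 ^ (a - b) + 1) % 2 = 1 := by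
    rcases Nat.exists_eq_add_of_le hd with ⟨e, he⟩
    rw [show a - b = 1 + e from he, pow_add]
    omega
  have h2 : (2 ^ (a - b) + 1) / 2 = 2 ^ (a - b - 1) := by
    rcases Nat.exists_eq_add_of_le hd with ⟨e, he⟩
    rw [show a - b = 1 + e from he, pow_add]
    simp
    omega
  rw [h1, h2]
  have hbp := bw_pow (a - b - 1)
  unfold binaryWeight at hbp
  rw [List.sum_cons]
  omega

lemma log_two_pows {a b : ℕ} (h : b < a) : Nat.log 2 (2 ^ a + 2 ^ b) = a := by
  have h1 : (2:ℕ) ^ b < 2 ^ a := Nat.pow_lt_pow_right (by norm_num) h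
  have h2 : (2:ℕ) ^ (a + 1) = 2 ^ a + 2 ^ a := by rw [pow_succ]; ring
  have g1 : (2:ℕ) ^ a ≤ 2 ^ a + 2 ^ b := Nat.le_add_right _ _
  have g2 : 2 ^ a + 2 ^ b < 2 ^ (a + 1) := by
    rw [h2]
    exact Nat.add_lt_add_left h1 _
  exact Nat.log_eq_of_pow_le_of_lt_pow g1 g2

section
variable {A : Set (List ℕ)} (hA : Admissible A)

lemma chainSet_nonempty (hA : Admissible A) {n : ℕ} (hn : 0 < n) :
    {r | ∃ c ∈ A, IsAdditionChainFor c n ∧ c.length = r + 1}.Nonempty := by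
  obtain ⟨c, hcA, hcf, _⟩ := hA.1 n hn
  have hne : c ≠ [] := by
    intro h
    have := hcf.1.1
    simp [h] at this
  have : 0 < c.length := List.length_pos_iff.mpr hne
  exact ⟨c.length - 1, c, hcA, hcf, by omega⟩

lemma chainLength_spec (hA : Admissible A) {n : ℕ} (hn : 0 < n) :
    ∃ c ∈ A, IsAdditionChainFor c n ∧ c.length = chainLength A n + 1 :=
  Nat.sInf_mem (chainSet_nonempty hA hn)

lemma le_two_pow_chainLength (hA : Admissible A) {n : ℕ} (hn : 0 < n) :
    n ≤ 2 ^ chainLength A n := by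
  obtain ⟨c, _, hcf, hlen⟩ := chainLength_spec hA hn
  have := chain_le hcf.1 (c.length - 1) (by omega)
  rw [hcf.2] at this
  calc n ≤ 2 ^ (c.length - 1) := this
    _ = 2 ^ chainLength A n := by rw [hlen]; simp

lemma chainLength_le (hA : Admissible A) {n : ℕ} (hn : 0 < n) :
    chainLength A n + 1 ≤ Nat.log 2 n + binaryWeight n := by
  obtain ⟨c, hcA, hcf, hle⟩ := hA.1 n hn
  have hne : c ≠ [] := by
    intro h
    have := hcf.1.1
    simp [h] at this
  have hpos : 0 < c.length := List.length_pos_iff.mpr hne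
  have hmem : c.length - 1 ∈ {r | ∃ c ∈ A, IsAdditionChainFor c n ∧ c.length = r + 1} :=
    ⟨c, hcA, hcf, by omega⟩
  have := Nat.sInf_le hmem
  unfold chainLength
  omega

lemma chainLength_pow (hA : Admissible A) (a : ℕ) : chainLength A (2 ^ a) = a := by
  have h1 := chainLength_le hA (n := 2 ^ a) (by positivity)
  rw [bw_pow, Nat.log_pow (by norm_num)] at h1
  have h2 := le_two_pow_chainLength hA (n := 2 ^ a) (by positivity)
  have := (Nat.pow_le_pow_iff_right (by norm_num : 1 < 2)).mp h2
  omega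

lemma chainLength_two_pows (hA : Admissible A) {a b : ℕ} (h : b < a) :
    chainLength A (2 ^ a + 2 ^ b) = a + 1 := by
  have hpos : 0 < 2 ^ a + 2 ^ b := by positivity
  have h1 := chainLength_le hA hpos
  rw [bw_two_pows h, log_two_pows h] at h1
  have h2 := le_two_pow_chainLength hA hpos
  have h3 : (2:ℕ) ^ a < 2 ^ chainLength A (2 ^ a + 2 ^ b) := by
    have : (0:ℕ) < 2 ^ b := by positivity
    omega
  have := (Nat.pow_lt_pow_iff_right (by norm_num : 1 < 2)).mp h3
  omega

end


noncomputable def ff (d : ℕ) : ℝ := (d + 1 : ℝ) - Real.logb 2 (2 ^ d + 1)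

lemma two_pow_pos' (d : ℕ) : (0:ℝ) < 2 ^ d + 1 := by positivity

lemma logb2_two_pow (a : ℕ) : Real.logb 2 ((2:ℝ) ^ a) = a := by
  rw [Real.logb_pow, Real.logb_self_eq_one (by norm_num)]
  ring

lemma ff_zero : ff 0 = 0 := by
  unfold ff
  rw [show ((2:ℝ) ^ (0:ℕ) + 1) = 2 by norm_num,
    Real.logb_self_eq_one (by norm_num : (1:ℝ) < 2)]
  norm_num

lemma ff_nonneg (d : ℕ) : 0 ≤ ff d := by
  have h1 : Real.logb 2 ((2:ℝ) ^ d + 1) ≤ Real.logb 2 ((2:ℝ) ^ (d+1)) := by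
    apply Real.logb_le_logb_of_le (by norm_num) (two_pow_pos' d)
    rw [pow_succ]
    have : (1:ℝ) ≤ 2 ^ d := one_le_pow₀ (by norm_num)
    linarith
  rw [logb2_two_pow] at h1
  unfold ff
  push_cast at h1 ⊢
  linarith

lemma ff_lt_one (d : ℕ) : ff d < 1 := by
  have h1 : Real.logb 2 ((2:ℝ) ^ d) < Real.logb 2 ((2:ℝ) ^ d + 1) := by
    apply Real.logb_lt_logb (by norm_num) (by positivity)
    linarith
  rw [logb2_two_pow] at h1
  unfold ff
  linarith

lemma ff_strictMono : StrictMono ff := by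
  apply strictMono_nat_of_lt_succ
  intro d
  unfold ff
  have key : Real.logb 2 ((2:ℝ) ^ (d+1) + 1) < Real.logb 2 ((2:ℝ) ^ d + 1) + 1 := by
    have h2 : Real.logb 2 (((2:ℝ) ^ d + 1) * 2) =
        Real.logb 2 ((2:ℝ) ^ d + 1) + 1 := by
      rw [Real.logb_mul (by positivity) (by norm_num),
        Real.logb_self_eq_one (by norm_num : (1:ℝ) < 2)]
    rw [← h2]
    apply Real.logb_lt_logb (by norm_num) (two_pow_pos' (d+1))
    rw [pow_succ]
    have : (1:ℝ) ≤ 2 ^ d := one_le_pow₀ (by norm_num)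
    linarith
  push_cast
  linarith

lemma ff_one_sub_le (d : ℕ) : 1 - ff d ≤ 2 * (1/2 : ℝ) ^ d := by
  have hx : (0:ℝ) < (1/2 : ℝ) ^ d := by positivity
  have hp : (0:ℝ) < (2:ℝ) ^ d := by positivity
  have hsplit : (2:ℝ) ^ d + 1 = 2 ^ d * (1 + (1/2:ℝ) ^ d) := by
    rw [mul_add, mul_one, ← mul_pow]; norm_num
  have h1 : Real.logb 2 ((2:ℝ) ^ d + 1) =
      d + Real.logb 2 (1 + (1/2:ℝ) ^ d) := by
    rw [hsplit, Real.logb_mul (by positivity) (by positivity), logb2_two_pow]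
  have h2 : Real.log (1 + (1/2:ℝ) ^ d) ≤ (1/2:ℝ) ^ d := by
    have := Real.log_le_sub_one_of_pos (x := 1 + (1/2:ℝ) ^ d) (by positivity)
    linarith
  have hlog2 : (1/2 : ℝ) < Real.log 2 := by
    have := Real.log_two_gt_d9
    linarith
  have h3 : Real.logb 2 (1 + (1/2:ℝ) ^ d) ≤ 2 * (1/2:ℝ) ^ d := by
    unfold Real.logb
    rw [div_le_iff₀ (by linarith)]
    nlinarith
  unfold ff
  rw [h1]
  push_cast
  linarith


lemma range_isWF {f : ℕ → ℝ} (hf : StrictMono f) : (Set.range f).IsWF := by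
  have e : ℕ ≃o Set.range f := StrictMono.orderIso f hf
  have e' : ((· < ·) : Set.range f → Set.range f → Prop) ≃r
      ((· < ·) : ℕ → ℕ → Prop) := ⟨e.symm.toEquiv, e.symm.lt_iff_lt⟩
  exact e'.toRelEmbedding.wellFounded (Nat.lt_wfRel.wf)

lemma setOrderType_range {f : ℕ → ℝ} (hf : StrictMono f) :
    setOrderType (Set.range f) = Ordinal.omega0 := by
  have hwf := range_isWF hf
  rw [setOrderType, dif_pos hwf]
  have e : ℕ ≃o Set.range f := StrictMono.orderIso f hf
  have e' : ((· < ·) : ℕ → ℕ → Prop) ≃r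
      ((· < ·) : Set.range f → Set.range f → Prop) := ⟨e.toEquiv, e.lt_iff_lt⟩
  letI : WellFoundedLT (Set.range f) := ⟨hwf⟩
  rw [← Ordinal.type_nat_lt]
  exact (Ordinal.type_eq.mpr ⟨e'.symm⟩)

lemma range_inter_finite {f : ℕ → ℝ} (hf : StrictMono f)
    (hb : ∀ d : ℕ, 1 - f d ≤ 2 * (1/2:ℝ) ^ d) {r : ℝ} (hr : r < 1) :
    (Set.range f ∩ Set.Iic r).Finite := by
  obtain ⟨N, hN⟩ : ∃ N : ℕ, ((1:ℝ)/2) ^ N < (1 - r) / 2 := by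
    apply exists_pow_lt_of_lt_one (by linarith) (by norm_num)
  apply Set.Finite.subset (Set.finite_Iio N |>.image f)
  rintro x ⟨⟨d, rfl⟩, hx⟩
  refine ⟨d, ?_, rfl⟩
  simp only [Set.mem_Iio]
  by_contra hd
  push_neg at hd
  have h1 : ((1:ℝ)/2) ^ d ≤ (1/2:ℝ) ^ N :=
    pow_le_pow_of_le_one (by norm_num) (by norm_num) hd
  have := hb d
  simp only [Set.mem_Iic] at hx
  linarith


lemma chain_final {c : List ℕ} {n r : ℕ} (hcf : IsAdditionChainFor c n)
    (hr : c.length = r + 1) (hle : 2 ^ r ≤ 2 * n) :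
    (∃ a, n = 2 ^ a) ∨ ∃ a b, b < a ∧ n = 2 ^ a + 2 ^ b := by
  have hn : c.getD r 0 = n := by
    have := hcf.2
    rw [hr] at this
    simpa using this
  rcases Nat.eq_zero_or_pos r with rfl | hr0
  · left
    refine ⟨0, ?_⟩
    have := hcf.1.1
    rw [hn] at this
    omega
  · obtain ⟨m, rfl⟩ : ∃ m, r = m + 1 := ⟨r - 1, by omega⟩
    have hsplit : (2:ℕ) ^ (m+1) = 2 ^ m + 2 ^ m := by rw [pow_succ]; ring
    rcases lt_or_ge (2 ^ m) n with h | h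
    · obtain ⟨b, hb, he⟩ :=
        (chain_struct hcf.1 (m+1) (by omega)).2 m rfl (by omega)
      rw [hn] at he
      rcases Nat.eq_or_lt_of_le hb with hbe | hblt
      · left
        refine ⟨m + 1, ?_⟩
        rw [hbe] at he
        omega
      · right
        exact ⟨m, b, hblt, he⟩
    · left
      exact ⟨m, by omega⟩

section
variable {A : Set (List ℕ)}

lemma defect_le_one_struct (hA : Admissible A) {n : ℕ} (hn : 0 < n)
    (h : Adefect A n ≤ 1) :
    (∃ a, n = 2 ^ a) ∨ ∃ a b, b < a ∧ n = 2 ^ a + 2 ^ b := by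
  set L := chainLength A n with hL
  have hnR : (0:ℝ) < (n:ℝ) := by exact_mod_cast hn
  have hcast : (L:ℝ) ≤ Real.logb 2 (n:ℝ) + 1 := by
    unfold Adefect at h
    rw [← hL] at h
    linarith
  have h2 : (2:ℕ) ^ L ≤ 2 * n := by
    have hlog2n : Real.logb 2 ((2 * n : ℕ) : ℝ) = Real.logb 2 (n:ℝ) + 1 := by
      push_cast
      rw [Real.logb_mul (by norm_num) (by positivity),
        Real.logb_self_eq_one (by norm_num : (1:ℝ) < 2)]
      ring
    have hmono : Real.logb 2 ((2:ℝ) ^ L) ≤ Real.logb 2 ((2 * n : ℕ) : ℝ) := by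
      rw [logb2_two_pow, hlog2n]
      exact hcast
    have := (Real.logb_le_logb (by norm_num : (1:ℝ) < 2) (by positivity)
      (by push_cast; positivity)).mp hmono
    exact_mod_cast this
  obtain ⟨c, _, hcf, hlen⟩ := chainLength_spec hA hn
  exact chain_final hcf hlen h2

lemma defect_pow (hA : Admissible A) (a : ℕ) : Adefect A (2 ^ a) = 0 := by
  unfold Adefect
  rw [chainLength_pow hA]
  have : (((2:ℕ) ^ a : ℕ) : ℝ) = (2:ℝ) ^ a := by push_cast; ring
  rw [this, logb2_two_pow]
  ring

lemma defect_two_pows (hA : Admissible A) {a b : ℕ} (h : b < a) :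
    Adefect A (2 ^ a + 2 ^ b) = ff (a - b) := by
  unfold Adefect ff
  rw [chainLength_two_pows hA h]
  have hnat : (2:ℕ) ^ a + 2 ^ b = 2 ^ b * (2 ^ (a - b) + 1) := by
    rw [mul_add, mul_one, ← pow_add]
    congr 2
    omega
  have hc : (((2:ℕ) ^ a + 2 ^ b : ℕ) : ℝ) = (2:ℝ) ^ b * ((2:ℝ) ^ (a - b) + 1) := by
    rw [hnat]
    push_cast
    ring
  rw [hc, Real.logb_mul (by positivity) (by positivity), logb2_two_pow,
    Nat.cast_sub h.le]
  push_cast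
  ring

lemma stable_pow (hA : Admissible A) (a : ℕ) : AStable A (2 ^ a) := by
  intro k
  rw [show (2:ℕ) ^ k * 2 ^ a = 2 ^ (a + k) by rw [← pow_add]; ring_nf,
    chainLength_pow hA, chainLength_pow hA]

lemma stable_two_pows (hA : Admissible A) {a b : ℕ} (h : b < a) :
    AStable A (2 ^ a + 2 ^ b) := by
  intro k
  rw [show (2:ℕ) ^ k * (2 ^ a + 2 ^ b) = 2 ^ (a + k) + 2 ^ (b + k) by
      rw [mul_add, ← pow_add, ← pow_add]; ring_nf,
    chainLength_two_pows hA (by omega), chainLength_two_pows hA h]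
  omega

lemma defect_le_one_stable (hA : Admissible A) {n : ℕ} (hn : 0 < n)
    (h : Adefect A n ≤ 1) : AStable A n := by
  rcases defect_le_one_struct hA hn h with ⟨a, rfl⟩ | ⟨a, b, hab, rfl⟩
  · exact stable_pow hA a
  · exact stable_two_pows hA hab

lemma mem_range_ff (hA : Admissible A) (d : ℕ) :
    ∃ n : ℕ, 0 < n ∧ AStable A n ∧ ff d = Adefect A n := by
  rcases Nat.eq_zero_or_pos d with rfl | hd
  · refine ⟨1, one_pos, ?_, ?_⟩
    · have := stable_pow hA 0
      simpa using this
    · have := defect_pow hA 0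
      rw [ff_zero]
      simp only [pow_zero] at this
      exact this.symm
  · refine ⟨2 ^ d + 2 ^ 0, by positivity, stable_two_pows hA hd, ?_⟩
    rw [defect_two_pows hA hd, Nat.sub_zero]

lemma defect_inter_eq (hA : Admissible A) :
    defectSet A ∩ Set.Icc (0:ℝ) 1 = Set.range ff := by
  ext x
  constructor
  · rintro ⟨⟨n, hn, rfl⟩, _, hx1⟩
    rcases defect_le_one_struct hA hn hx1 with ⟨a, rfl⟩ | ⟨a, b, hab, rfl⟩
    · exact ⟨0, ff_zero.trans (defect_pow hA a).symm⟩
    · exact ⟨a - b, (defect_two_pows hA hab).symm⟩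
  · rintro ⟨d, rfl⟩
    obtain ⟨n, hn, _, he⟩ := mem_range_ff hA d
    exact ⟨⟨n, hn, he⟩, ff_nonneg d, (ff_lt_one d).le⟩

lemma stable_inter_eq (hA : Admissible A) :
    stableDefectSet A ∩ Set.Icc (0:ℝ) 1 = Set.range ff := by
  ext x
  constructor
  · rintro ⟨⟨n, hn, _, rfl⟩, _, hx1⟩
    rcases defect_le_one_struct hA hn hx1 with ⟨a, rfl⟩ | ⟨a, b, hab, rfl⟩
    · exact ⟨0, ff_zero.trans (defect_pow hA a).symm⟩
    · exact ⟨a - b, (defect_two_pows hA hab).symm⟩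
  · rintro ⟨d, rfl⟩
    obtain ⟨n, hn, hst, he⟩ := mem_range_ff hA d
    exact ⟨⟨n, hn, hst, he⟩, ff_nonneg d, (ff_lt_one d).le⟩

end

/-- `𝒟^A ∩ [0,1]` has order type `ω`, while `𝒟^A ∩ [0,r]` is finite for any `r < 1`;
moreover every positive `n` with `δ^A(n) ≤ 1` is `A`-stable, so every defect in
`𝒟^A ∩ [0,1]` is an `A`-stable defect and `𝒟^A_st ∩ [0,1]` also has order type `ω`. -/
theorem defectSet_inter_Icc_zero_one_orderType
    (A : Set (List ℕ)) (hA : Admissible A) :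
    (defectSet A ∩ Set.Icc (0 : ℝ) 1).IsWF ∧
    setOrderType (defectSet A ∩ Set.Icc (0 : ℝ) 1) = Ordinal.omega0 ∧
    (∀ r : ℝ, r < 1 → (defectSet A ∩ Set.Icc (0 : ℝ) r).Finite) ∧
    (∀ n : ℕ, 0 < n → Adefect A n ≤ 1 → AStable A n) ∧
    defectSet A ∩ Set.Icc (0 : ℝ) 1 ⊆ stableDefectSet A ∧
    setOrderType (stableDefectSet A ∩ Set.Icc (0 : ℝ) 1) = Ordinal.omega0 := by
  refine ⟨?_, ?_, ?_, ?_, ?_, ?_⟩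
  · rw [defect_inter_eq hA]
    exact range_isWF ff_strictMono
  · rw [defect_inter_eq hA]
    exact setOrderType_range ff_strictMono
  · intro r hr
    apply Set.Finite.subset (range_inter_finite ff_strictMono ff_one_sub_le hr)
    rintro x ⟨hxd, hx0, hxr⟩
    refine ⟨?_, hxr⟩
    rw [← defect_inter_eq hA]
    exact ⟨hxd, hx0, by linarith⟩
  · intro n hn h
    exact defect_le_one_stable hA hn h
  · rintro x ⟨⟨n, hn, rfl⟩, hx0, hx1⟩
    exact ⟨n, hn, defect_le_one_stable hA hn hx1, rfl⟩
  · rw [stable_inter_eq hA]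
    exact setOrderType_range ff_strictMono
end
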